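/- arXiv:1301.5388 — 3 statements merged into one kernel-verified Lean document; each statement's English description precedes it below -/
import Mathlib

section
/- The function v is given explicitly by: v(t) = sin_p(a₁^{1/p} t + π_p/2) for 0 ≤ t ≤ π_p/(2a₁^{1/p}); v(t) = −(a₁/b₁)^{1/p} sin_p(b₁^{1/p}(t − π_p/(2a₁^{1/p}))) for π_p/(2a₁^{1/p}) < t ≤ π_p; and v(2π_p − t) = v(t) for t ∈ [π_p, 2π_p]. -/
/-- The one-dimensional `p`-Laplacian nonlinearity `φ_p(s) = |s|^{p-2} s`. -/
noncomputable def phi (p s : ℝ) : ℝ := |s| ^ (p - 2) * s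

/-- The `p`-analogue of `π`: `π_p = 2π (p-1)^{1/p} / (p sin(π/p))`. -/
noncomputable def pip (p : ℝ) : ℝ :=
  2 * Real.pi * (p - 1) ^ (1 / p) / (p * Real.sin (Real.pi / p))

namespace AuxV
open Real Set Filter MeasureTheory intervalIntegral

theorem phi_zero (r : ℝ) : phi r 0 = 0 := by simp [phi]

theorem phi_of_nonneg {r s : ℝ} (hr : 1 < r) (hs : 0 ≤ s) : phi r s = s ^ (r - 1) := by
  rcases eq_or_lt_of_le hs with h | h
  · rw [← h]; simp [phi, Real.zero_rpow (by linarith : r - 1 ≠ 0)]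
  · rw [phi, abs_of_pos h, ← Real.rpow_add_one h.ne']
    ring_nf

theorem phi_neg (r s : ℝ) : phi r (-s) = -phi r s := by simp [phi]

theorem phi_one {r : ℝ} (hr : 1 < r) : phi r 1 = 1 := by
  rw [phi_of_nonneg hr zero_le_one, Real.one_rpow]

theorem phi_decomp {r : ℝ} (hr : 1 < r) (s : ℝ) :
    phi r s = max s 0 ^ (r - 1) - max (-s) 0 ^ (r - 1) := by
  rcases le_total 0 s with h | h
  · rw [max_eq_left h, max_eq_right (by linarith), phi_of_nonneg hr h,
      Real.zero_rpow (by linarith : r - 1 ≠ 0), sub_zero]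
  · rw [max_eq_right h, max_eq_left (by linarith), Real.zero_rpow (by linarith : r - 1 ≠ 0),
      zero_sub, ← phi_of_nonneg hr (by linarith : (0:ℝ) ≤ -s), phi_neg, neg_neg]

theorem phi_mul_of_pos {r s : ℝ} (hr : 1 < r) (hs : 0 < s) (t : ℝ) :
    phi r (s * t) = s ^ (r - 1) * phi r t := by
  rw [phi, phi, abs_mul, abs_of_pos hs, Real.mul_rpow hs.le (abs_nonneg t)]
  rw [show s ^ (r-2) * |t| ^ (r-2) * (s * t) = (s ^ (r-2) * s) * (|t| ^ (r-2) * t) by ring,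
    ← Real.rpow_add_one hs.ne']
  ring_nf

theorem abs_phi {r : ℝ} (hr : 1 < r) (s : ℝ) : |phi r s| = |s| ^ (r - 1) := by
  rcases eq_or_ne s 0 with h | h
  · simp [h, phi_zero, Real.zero_rpow (by linarith : r - 1 ≠ 0)]
  · rw [phi, abs_mul, abs_of_nonneg (Real.rpow_nonneg (abs_nonneg s) _),
      ← Real.rpow_add_one (abs_ne_zero.2 h)]
    ring_nf

theorem phi_inv {p q : ℝ} (hp : 1 < p) (hq : q = p / (p - 1)) (s : ℝ) :
    phi q (phi p s) = s := by
  have hp1 : (0:ℝ) < p - 1 := by linarith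
  have hkey : (p - 1) * (q - 1) = 1 := by
    rw [hq]; field_simp; ring
  have hq1 : 1 < q := by
    nlinarith [hkey]
  have main : ∀ u : ℝ, 0 ≤ u → phi q (phi p u) = u := by
    intro u hu
    rw [phi_of_nonneg hp hu, phi_of_nonneg hq1 (Real.rpow_nonneg hu _),
      ← Real.rpow_mul hu, hkey, Real.rpow_one]
  rcases le_total 0 s with h | h
  · exact main s h
  · have h2 := main (-s) (by linarith)
    calc phi q (phi p s) = phi q (-(phi p (-s))) := by simp [phi_neg]
    _ = -(phi q (phi p (-s))) := phi_neg _ _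
    _ = s := by rw [h2, neg_neg]

theorem continuous_phi {r : ℝ} (hr : 1 < r) : Continuous (phi r) := by
  have : phi r = fun s => max s 0 ^ (r - 1) - max (-s) 0 ^ (r - 1) :=
    funext fun s => phi_decomp hr s
  rw [this]
  have hc : ∀ f : ℝ → ℝ, Continuous f → Continuous (fun s : ℝ => (f s) ^ (r - 1)) := by
    intro f hf
    apply continuous_iff_continuousAt.2 fun x => ?_
    exact (Real.continuousAt_rpow_const _ _ (Or.inr (by linarith))).comp hf.continuousAt
  exact ((hc _ (continuous_id.max continuous_const)).sub
    (hc _ (continuous_neg.max continuous_const)))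


/-- derivative of `(max u 0)^r` -/
theorem hasDerivAt_max_rpow {r : ℝ} (hr : 1 < r) (x : ℝ) :
    HasDerivAt (fun u : ℝ => max u 0 ^ r) (r * max x 0 ^ (r - 1)) x := by
  rcases lt_trichotomy x 0 with h | h | h
  · have : (fun u : ℝ => max u 0 ^ r) =ᶠ[nhds x] fun _ => (0:ℝ) ^ r := by
      filter_upwards [eventually_lt_nhds h] with u hu
      rw [max_eq_right hu.le]
    rw [show r * max x 0 ^ (r-1) = 0 by
      rw [max_eq_right h.le, Real.zero_rpow (by linarith : r - 1 ≠ 0), mul_zero]]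
    exact (hasDerivAt_const x ((0:ℝ)^r)).congr_of_eventuallyEq this
  · subst h
    rw [max_self, Real.zero_rpow (by linarith : r - 1 ≠ 0), mul_zero]
    rw [hasDerivAt_iff_tendsto_slope]
    apply squeeze_zero_norm' (a := fun u : ℝ => |u| ^ (r - 1))
    · filter_upwards [self_mem_nhdsWithin] with u (hu : u ≠ 0)
      rw [slope_def_field]
      rcases le_or_gt u 0 with h' | h'
      · simp [max_eq_right h', Real.zero_rpow (by linarith : r ≠ 0),
          Real.rpow_nonneg (abs_nonneg u)]
      · rw [max_eq_left h'.le, max_self, Real.zero_rpow (by linarith : r ≠ 0), sub_zero, sub_zero,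
          show u ^ r / u = u ^ (r-1) by rw [Real.rpow_sub h', Real.rpow_one]]
        rw [Real.norm_eq_abs,
          abs_of_nonneg (Real.rpow_nonneg h'.le _), abs_of_pos h']
    · have hc : ContinuousAt (fun u : ℝ => |u| ^ (r - 1)) 0 :=
        (Real.continuousAt_rpow_const _ _ (Or.inr (by linarith))).comp
          continuous_abs.continuousAt
      have := hc.tendsto
      rw [show |(0:ℝ)| ^ (r-1) = 0 by simp [Real.zero_rpow (by linarith : r - 1 ≠ 0)]] at this
      exact this.mono_left nhdsWithin_le_nhds
  · have : (fun u : ℝ => max u 0 ^ r) =ᶠ[nhds x] fun u => u ^ r := by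
      filter_upwards [eventually_gt_nhds h] with u hu
      rw [max_eq_left hu.le]
    rw [show r * max x 0 ^ (r-1) = r * x ^ (r-1) by rw [max_eq_left h.le]]
    exact (Real.hasDerivAt_rpow_const (Or.inl h.ne')).congr_of_eventuallyEq this

/-- derivative of `|u|^r / r` is `phi r` -/
theorem hasDerivAt_F {r : ℝ} (hr : 1 < r) (y : ℝ) :
    HasDerivAt (fun u : ℝ => |u| ^ r / r) (phi r y) y := by
  have habs : (fun u : ℝ => |u| ^ r / r) =
      fun u : ℝ => (max u 0 ^ r + max (-u) 0 ^ r) / r := by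
    funext u
    rcases le_total 0 u with h | h
    · rw [abs_of_nonneg h, max_eq_left h, max_eq_right (by linarith),
        Real.zero_rpow (by linarith : r ≠ 0), add_zero]
    · rw [abs_of_nonpos h, max_eq_right h, max_eq_left (by linarith),
        Real.zero_rpow (by linarith : r ≠ 0), zero_add]
  rw [habs]
  have h1 := hasDerivAt_max_rpow hr y
  have h2 : HasDerivAt (fun u : ℝ => max (-u) 0 ^ r) (-(r * max (-y) 0 ^ (r-1))) y := by
    have := (hasDerivAt_max_rpow hr (-y)).comp y (hasDerivAt_neg y)
    simpa [mul_comm, Function.comp_def] using this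
  have := (h1.add h2).div_const r
  rw [show (r * max y 0 ^ (r - 1) + -(r * max (-y) 0 ^ (r - 1))) / r
      = max y 0 ^ (r-1) - max (-y) 0 ^ (r-1) by field_simp; ring] at this
  rw [phi_decomp hr]
  exact this


/-- 1-D autonomous ODE with continuous negative RHS: solutions through a common
point agree on a convex set. -/
theorem clock_neg {Θ : ℝ → ℝ} (hc : Continuous Θ) (hneg : ∀ u, Θ u < 0)
    {J : Set ℝ} (hJ : Convex ℝ J) {θ₁ θ₂ : ℝ → ℝ}
    (h₁ : ∀ t ∈ J, HasDerivAt θ₁ (Θ (θ₁ t)) t)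
    (h₂ : ∀ t ∈ J, HasDerivAt θ₂ (Θ (θ₂ t)) t)
    {t₀ : ℝ} (ht₀ : t₀ ∈ J) (he : θ₁ t₀ = θ₂ t₀) : ∀ t ∈ J, θ₁ t = θ₂ t := by
  set w : ℝ → ℝ := fun u => (Θ u)⁻¹ with hw
  have hwc : Continuous w := hc.inv₀ fun u => (hneg u).ne
  set Φ : ℝ → ℝ := fun u => ∫ s in (0:ℝ)..u, w s with hΦ
  have hΦd : ∀ u, HasDerivAt Φ (w u) u := by
    intro u
    exact integral_hasDerivAt_right (hwc.intervalIntegrable _ _)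
      (hwc.stronglyMeasurableAtFilter _ _) hwc.continuousAt
  have hΦanti : StrictAnti Φ := by
    intro u v huv
    have hint : ∀ a b : ℝ, IntervalIntegrable w volume a b := fun a b =>
      hwc.intervalIntegrable a b
    have : Φ v - Φ u = ∫ s in u..v, w s := integral_interval_sub_left (hint 0 v) (hint 0 u)
    have hpos : 0 < ∫ s in u..v, -w s := by
      apply intervalIntegral_pos_of_pos ((hwc.neg).intervalIntegrable u v) _ huv
      intro x
      have := hneg x
      simp only [hw, Pi.neg_apply]
      rw [neg_pos]
      exact inv_neg''.mpr this
    rw [intervalIntegral.integral_neg] at hpos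
    linarith
  have key : ∀ θ : ℝ → ℝ, (∀ t ∈ J, HasDerivAt θ (Θ (θ t)) t) →
      ∀ t ∈ J, Φ (θ t) - t = Φ (θ t₀) - t₀ := by
    intro θ hθ t ht
    have hd : ∀ s ∈ J, HasDerivWithinAt (fun t => Φ (θ t) - t) ((fun _ => (0:ℝ)) s) J s := by
      intro s hs
      have : HasDerivAt (fun t => Φ (θ t) - t) (w (θ s) * Θ (θ s) - 1) s :=
        (((hΦd (θ s)).comp s (hθ s hs)).sub (hasDerivAt_id s))
      have hz : w (θ s) * Θ (θ s) - 1 = 0 := by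
        rw [hw]
        rw [inv_mul_cancel₀ (hneg (θ s)).ne, sub_self]
      rw [hz] at this
      exact this.hasDerivWithinAt
    have := Convex.norm_image_sub_le_of_norm_hasDerivWithin_le hd
      (fun x _ => by simp : ∀ x ∈ J, ‖(fun _ => (0:ℝ)) x‖ ≤ 0) hJ ht₀ ht
    rw [mul_comm, mul_zero, norm_le_zero_iff, sub_eq_zero] at this
    rw [this]
  have e1 := key θ₁ h₁
  have e2 := key θ₂ h₂
  intro t ht
  have : Φ (θ₁ t) = Φ (θ₂ t) := by
    have := e1 t ht
    have := e2 t ht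
    rw [he] at e1
    have a1 := e1 t ht
    have a2 := e2 t ht
    linarith
  exact hΦanti.injective this

theorem clock_pos {Θ : ℝ → ℝ} (hc : Continuous Θ) (hpos : ∀ u, 0 < Θ u)
    {J : Set ℝ} (hJ : Convex ℝ J) {θ₁ θ₂ : ℝ → ℝ}
    (h₁ : ∀ t ∈ J, HasDerivAt θ₁ (Θ (θ₁ t)) t)
    (h₂ : ∀ t ∈ J, HasDerivAt θ₂ (Θ (θ₂ t)) t)
    {t₀ : ℝ} (ht₀ : t₀ ∈ J) (he : θ₁ t₀ = θ₂ t₀) : ∀ t ∈ J, θ₁ t = θ₂ t := by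
  have hc' : Continuous (fun u => -Θ (-u)) := (hc.comp continuous_neg).neg
  have hneg : ∀ u, -Θ (-u) < 0 := fun u => neg_neg_iff_pos.mpr (hpos (-u))
  have h₁' : ∀ t ∈ J, HasDerivAt (fun t => -θ₁ t) (-Θ (-(-θ₁ t))) t := by
    intro t ht; simp only [neg_neg]; exact (h₁ t ht).neg
  have h₂' : ∀ t ∈ J, HasDerivAt (fun t => -θ₂ t) (-Θ (-(-θ₂ t))) t := by
    intro t ht; simp only [neg_neg]; exact (h₂ t ht).neg
  have := clock_neg hc' hneg hJ h₁' h₂' ht₀ (by rw [he])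
  intro t ht
  have := this t ht
  simpa using this

noncomputable def Ga (a b p x : ℝ) : ℝ := (a * max x 0 ^ p + b * max (-x) 0 ^ p) / p

noncomputable def gf (a b p x : ℝ) : ℝ := a * max x 0 ^ (p-1) - b * max (-x) 0 ^ (p-1)

theorem hasDerivAt_Ga {p : ℝ} (hp : 1 < p) (a b x : ℝ) :
    HasDerivAt (fun u => Ga a b p u) (gf a b p x) x := by
  have h1 := (hasDerivAt_max_rpow hp x).const_mul a
  have h2 : HasDerivAt (fun u : ℝ => b * max (-u) 0 ^ p) (b * -(p * max (-x) 0 ^ (p-1))) x := by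
    have := ((hasDerivAt_max_rpow hp (-x)).comp x (hasDerivAt_neg x)).const_mul b
    simpa [mul_comm] using this
  have := (h1.add h2).div_const p
  have hcast : (a * (p * max x 0 ^ (p - 1)) + b * -(p * max (-x) 0 ^ (p - 1))) / p
      = gf a b p x := by
    rw [gf]; field_simp; ring
  rw [hcast] at this
  exact this

theorem continuous_Ga {p : ℝ} (hp : 1 < p) (a b : ℝ) : Continuous (fun u => Ga a b p u) :=
  continuous_iff_continuousAt.2 fun x => (hasDerivAt_Ga hp a b x).continuousAt

theorem Ga_nonneg {p a b : ℝ} (hp : 0 < p) (ha : 0 ≤ a) (hb : 0 ≤ b) (x : ℝ) :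
    0 ≤ Ga a b p x := by
  apply div_nonneg _ hp.le
  have h1 : (0:ℝ) ≤ max x 0 ^ p := Real.rpow_nonneg (le_max_right _ _) _
  have h2 : (0:ℝ) ≤ max (-x) 0 ^ p := Real.rpow_nonneg (le_max_right _ _) _
  nlinarith

theorem field_eq {p : ℝ} (hp : 1 < p) (a b x : ℝ) :
    -a * phi p (max x 0) + b * phi p (max (-x) 0) = -gf a b p x := by
  rw [phi_of_nonneg hp (le_max_right x 0), phi_of_nonneg hp (le_max_right (-x) 0), gf]
  ring

theorem energy_const {p q a b : ℝ} (hp : 1 < p) (hq1 : 1 < q) (hqc : q = p/(p-1))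
    {I : Set ℝ} (hI : Convex ℝ I) {x d : ℝ → ℝ}
    (h : ∀ t ∈ I, HasDerivAt x (d t) t)
    (h' : ∀ t ∈ I, HasDerivAt (fun s => phi p (d s))
      (-a * phi p (max (x t) 0) + b * phi p (max (-x t) 0)) t)
    {t s : ℝ} (ht : t ∈ I) (hs : s ∈ I) :
    Ga a b p (x t) + |phi p (d t)|^q / q = Ga a b p (x s) + |phi p (d s)|^q / q := by
  set H : ℝ → ℝ := fun u => Ga a b p (x u) + |phi p (d u)|^q / q with hH
  have hd : ∀ u ∈ I, HasDerivWithinAt H ((fun _ => (0:ℝ)) u) I u := by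
    intro u hu
    have hg := (hasDerivAt_Ga hp a b (x u)).comp u (h u hu)
    have hf := (hasDerivAt_F hq1 (phi p (d u))).comp u (h' u hu)
    have := hg.add hf
    have hz : gf a b p (x u) * d u + phi q (phi p (d u)) *
        (-a * phi p (max (x u) 0) + b * phi p (max (-(x u)) 0)) = 0 := by
      rw [phi_inv hp hqc, field_eq hp]
      ring
    rw [hz] at this
    exact this.hasDerivWithinAt
  have := Convex.norm_image_sub_le_of_norm_hasDerivWithin_le hd
    (fun u _ => by simp : ∀ u ∈ I, ‖(fun _ => (0:ℝ)) u‖ ≤ 0) hI hs ht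
  rw [mul_comm, mul_zero, norm_le_zero_iff, sub_eq_zero] at this
  exact this

theorem q_gt_one {p q : ℝ} (hp : 1 < p) (hqc : q = p/(p-1)) : 1 < q := by
  rw [hqc]
  rw [lt_div_iff₀ (by linarith : (0:ℝ) < p - 1)]
  linarith

theorem local_Ypos {p q a b E : ℝ} (hp : 1 < p) (hqc : q = p/(p-1)) (ha : 0 < a) (hb : 0 < b)
    {I : Set ℝ} (hI : Convex ℝ I)
    {x₁ d₁ x₂ d₂ : ℝ → ℝ}
    (h₁ : ∀ t ∈ I, HasDerivAt x₁ (d₁ t) t) (h₂ : ∀ t ∈ I, HasDerivAt x₂ (d₂ t) t)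
    (hE₁ : ∀ t ∈ I, Ga a b p (x₁ t) + |phi p (d₁ t)|^q / q = E)
    (hE₂ : ∀ t ∈ I, Ga a b p (x₂ t) + |phi p (d₂ t)|^q / q = E)
    {t₁ : ℝ} (ht₁ : t₁ ∈ I)
    (hc₁ : ContinuousAt (fun t => phi p (d₁ t)) t₁)
    (hc₂ : ContinuousAt (fun t => phi p (d₂ t)) t₁)
    (hxx : x₁ t₁ = x₂ t₁) (hYY : phi p (d₁ t₁) = phi p (d₂ t₁))
    (hpos : 0 < phi p (d₁ t₁)) :
    ∃ ε > 0, ∀ t ∈ I ∩ Metric.ball t₁ ε, x₁ t = x₂ t ∧ phi p (d₁ t) = phi p (d₂ t) := by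
  have hq1 : 1 < q := q_gt_one hp hqc
  have hq0 : (0:ℝ) < q := by linarith
  set y₀ := phi p (d₁ t₁) with hy₀def
  set Yhat : ℝ → ℝ := fun u => max ((q * max (E - Ga a b p u) 0) ^ (1/q)) (y₀/2) with hYhatdef
  have hYhat_pos : ∀ u, 0 < Yhat u := fun u =>
    lt_of_lt_of_le (half_pos hpos) (le_max_right _ _)
  have hYhatc : Continuous Yhat := by
    apply Continuous.max _ continuous_const
    apply continuous_iff_continuousAt.2 fun u => ?_
    apply (Real.continuousAt_rpow_const _ _ (Or.inr (by positivity : (0:ℝ) ≤ 1/q))).comp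
    exact (continuous_const.mul
      ((continuous_const.sub (continuous_Ga hp a b)).max continuous_const)).continuousAt
  set Θ : ℝ → ℝ := fun u => Yhat u ^ (q - 1) with hΘdef
  have hΘc : Continuous Θ := by
    apply continuous_iff_continuousAt.2 fun u => ?_
    exact (Real.continuousAt_rpow_const _ _ (Or.inr (by linarith : (0:ℝ) ≤ q - 1))).comp
      hYhatc.continuousAt
  have hΘpos : ∀ u, 0 < Θ u := fun u => Real.rpow_pos_of_pos (hYhat_pos u) _
  have hev : ∀ᶠ t in nhds t₁, y₀/2 < phi p (d₁ t) ∧ y₀/2 < phi p (d₂ t) := by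
    apply Filter.Eventually.and
    · exact hc₁.eventually (eventually_gt_nhds (half_lt_self hpos))
    · apply hc₂.eventually
      apply eventually_gt_nhds
      show y₀ / 2 < phi p (d₂ t₁)
      rw [← hYY]
      exact half_lt_self hpos
  obtain ⟨ε, hε, hball⟩ := Metric.eventually_nhds_iff.mp hev
  refine ⟨ε, hε, ?_⟩
  set J := I ∩ Metric.ball t₁ ε with hJdef
  have hJconv : Convex ℝ J := hI.inter (convex_ball _ _)
  have hJI : J ⊆ I := Set.inter_subset_left
  have main : ∀ (x d : ℝ → ℝ), (∀ t ∈ I, HasDerivAt x (d t) t) →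
      (∀ t ∈ I, Ga a b p (x t) + |phi p (d t)|^q / q = E) →
      (∀ t ∈ J, y₀/2 < phi p (d t)) →
      (∀ t ∈ J, phi p (d t) = Yhat (x t)) ∧ (∀ t ∈ J, HasDerivAt x (Θ (x t)) t) := by
    intro x d hx hE hY
    have hrel : ∀ t ∈ J, phi p (d t) = Yhat (x t) := by
      intro t ht
      have hYpos : 0 < phi p (d t) := lt_trans (half_pos hpos) (hY t ht)
      set Y := phi p (d t) with hYdef
      have hEt := hE t (hJI ht)
      have habs : |Y| = Y := abs_of_pos hYpos
      rw [habs] at hEt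
      have hEG : E - Ga a b p (x t) = Y^q / q := by linarith
      have hmax : max (E - Ga a b p (x t)) 0 = Y^q / q := by
        rw [hEG]; exact max_eq_left (by positivity)
      have hYq : (q * (Y^q / q)) ^ (1/q) = Y := by
        rw [mul_div_cancel₀ _ (ne_of_gt hq0), ← Real.rpow_mul hYpos.le,
          mul_one_div_cancel (ne_of_gt hq0), Real.rpow_one]
      rw [hYhatdef]
      simp only [hmax, hYq]
      exact (max_eq_left (hY t ht).le).symm
    refine ⟨hrel, fun t ht => ?_⟩
    have hd := hx t (hJI ht)
    have : d t = Θ (x t) := by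
      have h1 : phi q (phi p (d t)) = d t := phi_inv hp hqc (d t)
      rw [hrel t ht] at h1
      rw [← h1, hΘdef, phi_of_nonneg hq1 (hYhat_pos (x t)).le]
    rw [this] at hd
    exact hd
  obtain ⟨hrel₁, hode₁⟩ := main x₁ d₁ h₁ hE₁ (fun t ht => (hball (Metric.mem_ball.mp ht.2)).1)
  obtain ⟨hrel₂, hode₂⟩ := main x₂ d₂ h₂ hE₂ (fun t ht => (hball (Metric.mem_ball.mp ht.2)).2)
  have hxeq := clock_pos hΘc hΘpos hJconv hode₁ hode₂
    (t₀ := t₁) ⟨ht₁, Metric.mem_ball_self hε⟩ hxx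
  intro t ht
  have hx := hxeq t ht
  refine ⟨hx, ?_⟩
  rw [hrel₁ t ht, hrel₂ t ht, hx]

theorem local_Xpos {p q a b E : ℝ} (hp : 1 < p) (hqc : q = p/(p-1)) (ha : 0 < a) (hb : 0 < b)
    {I : Set ℝ} (hI : Convex ℝ I)
    {x₁ d₁ x₂ d₂ : ℝ → ℝ}
    (h₁ : ∀ t ∈ I, HasDerivAt x₁ (d₁ t) t) (h₂ : ∀ t ∈ I, HasDerivAt x₂ (d₂ t) t)
    (h₁' : ∀ t ∈ I, HasDerivAt (fun s => phi p (d₁ s))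
      (-a * phi p (max (x₁ t) 0) + b * phi p (max (-x₁ t) 0)) t)
    (h₂' : ∀ t ∈ I, HasDerivAt (fun s => phi p (d₂ s))
      (-a * phi p (max (x₂ t) 0) + b * phi p (max (-x₂ t) 0)) t)
    (hE₁ : ∀ t ∈ I, Ga a b p (x₁ t) + |phi p (d₁ t)|^q / q = E)
    (hE₂ : ∀ t ∈ I, Ga a b p (x₂ t) + |phi p (d₂ t)|^q / q = E)
    {t₁ : ℝ} (ht₁ : t₁ ∈ I)
    (hxx : x₁ t₁ = x₂ t₁) (hYY : phi p (d₁ t₁) = phi p (d₂ t₁))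
    (hpos : 0 < x₁ t₁) :
    ∃ ε > 0, ∀ t ∈ I ∩ Metric.ball t₁ ε, x₁ t = x₂ t ∧ phi p (d₁ t) = phi p (d₂ t) := by
  have hq1 : 1 < q := q_gt_one hp hqc
  have hq0 : (0:ℝ) < q := by linarith
  have hp0 : (0:ℝ) < p := by linarith
  set x₀ := x₁ t₁ with hx₀def
  set Xhat : ℝ → ℝ := fun u => max ((p * max (E - |u|^q / q) 0 / a) ^ (1/p)) (x₀/2) with hXhatdef
  have hXhat_pos : ∀ u, 0 < Xhat u := fun u =>
    lt_of_lt_of_le (half_pos hpos) (le_max_right _ _)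
  have hXhatc : Continuous Xhat := by
    apply Continuous.max _ continuous_const
    apply continuous_iff_continuousAt.2 fun u => ?_
    apply (Real.continuousAt_rpow_const _ _ (Or.inr (by positivity : (0:ℝ) ≤ 1/p))).comp
    apply ContinuousAt.div_const
    apply Continuous.continuousAt
    apply continuous_const.mul
    apply Continuous.max _ continuous_const
    apply continuous_const.sub
    apply Continuous.div_const
    apply continuous_iff_continuousAt.2 fun v => ?_
    exact (Real.continuousAt_rpow_const _ _ (Or.inr (by linarith : (0:ℝ) ≤ q))).comp
      continuous_abs.continuousAt
  set Θ : ℝ → ℝ := fun u => -(a * Xhat u ^ (p - 1)) with hΘdef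
  have hΘc : Continuous Θ := by
    apply Continuous.neg
    apply continuous_const.mul
    apply continuous_iff_continuousAt.2 fun u => ?_
    exact (Real.continuousAt_rpow_const _ _ (Or.inr (by linarith : (0:ℝ) ≤ p - 1))).comp
      hXhatc.continuousAt
  have hΘneg : ∀ u, Θ u < 0 := fun u => by
    have : 0 < a * Xhat u ^ (p - 1) := by positivity
    simpa [hΘdef] using this
  have hev : ∀ᶠ t in nhds t₁, x₀/2 < x₁ t ∧ x₀/2 < x₂ t := by
    apply Filter.Eventually.and
    · exact (h₁ t₁ ht₁).continuousAt.eventually (eventually_gt_nhds (half_lt_self hpos))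
    · apply (h₂ t₁ ht₁).continuousAt.eventually
      apply eventually_gt_nhds
      show x₀ / 2 < x₂ t₁
      rw [← hxx]
      exact half_lt_self hpos
  obtain ⟨ε, hε, hball⟩ := Metric.eventually_nhds_iff.mp hev
  refine ⟨ε, hε, ?_⟩
  set J := I ∩ Metric.ball t₁ ε with hJdef
  have hJconv : Convex ℝ J := hI.inter (convex_ball _ _)
  have hJI : J ⊆ I := Set.inter_subset_left
  have main : ∀ (x d : ℝ → ℝ), (∀ t ∈ I, HasDerivAt x (d t) t) →
      (∀ t ∈ I, HasDerivAt (fun s => phi p (d s))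
        (-a * phi p (max (x t) 0) + b * phi p (max (-x t) 0)) t) →
      (∀ t ∈ I, Ga a b p (x t) + |phi p (d t)|^q / q = E) →
      (∀ t ∈ J, x₀/2 < x t) →
      (∀ t ∈ J, x t = Xhat (phi p (d t))) ∧
        (∀ t ∈ J, HasDerivAt (fun s => phi p (d s)) (Θ (phi p (d t))) t) := by
    intro x d hx hx' hE hX
    have hrel : ∀ t ∈ J, x t = Xhat (phi p (d t)) := by
      intro t ht
      have hXpos : 0 < x t := lt_trans (half_pos hpos) (hX t ht)
      have hEt := hE t (hJI ht)
      have hGa : Ga a b p (x t) = a * x t ^ p / p := by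
        rw [Ga, max_eq_left hXpos.le, max_eq_right (by linarith : -x t ≤ 0),
          Real.zero_rpow (ne_of_gt hp0), mul_zero, add_zero]
      rw [hGa] at hEt
      have hEG : E - |phi p (d t)|^q / q = a * x t ^ p / p := by linarith
      have hmax : max (E - |phi p (d t)|^q / q) 0 = a * x t ^ p / p := by
        rw [hEG]; exact max_eq_left (by positivity)
      have hXq : (p * (a * x t ^ p / p) / a) ^ (1/p) = x t := by
        rw [show p * (a * x t ^ p / p) / a = x t ^ p by field_simp]
        rw [← Real.rpow_mul hXpos.le, mul_one_div_cancel (ne_of_gt hp0), Real.rpow_one]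
      rw [hXhatdef]
      simp only [hmax, hXq]
      exact (max_eq_left (hX t ht).le).symm
    refine ⟨hrel, fun t ht => ?_⟩
    have hd := hx' t (hJI ht)
    have hXpos : 0 < x t := lt_trans (half_pos hpos) (hX t ht)
    have : -a * phi p (max (x t) 0) + b * phi p (max (-x t) 0) = Θ (phi p (d t)) := by
      rw [max_eq_left hXpos.le, max_eq_right (by linarith : -x t ≤ 0), phi_zero, mul_zero,
        add_zero, phi_of_nonneg hp hXpos.le]
      simp only [hΘdef]
      rw [← hrel t ht]
      ring
    rw [this] at hd
    exact hd
  obtain ⟨hrel₁, hode₁⟩ := main x₁ d₁ h₁ h₁' hE₁ (fun t ht => (hball (Metric.mem_ball.mp ht.2)).1)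
  obtain ⟨hrel₂, hode₂⟩ := main x₂ d₂ h₂ h₂' hE₂ (fun t ht => (hball (Metric.mem_ball.mp ht.2)).2)
  have hYeq := clock_neg hΘc hΘneg hJconv hode₁ hode₂
    (t₀ := t₁) ⟨ht₁, Metric.mem_ball_self hε⟩ hYY
  intro t ht
  have hY := hYeq t ht
  refine ⟨?_, hY⟩
  rw [hrel₁ t ht, hrel₂ t ht, hY]

theorem Ga_neg {p a b x : ℝ} : Ga b a p (-x) = Ga a b p x := by
  rw [Ga, Ga, neg_neg]; ring

theorem uniq {p q a b : ℝ} (hp : 1 < p) (hqc : q = p/(p-1)) (ha : 0 < a) (hb : 0 < b)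
    {I : Set ℝ} (hI : Convex ℝ I)
    {x₁ d₁ x₂ d₂ : ℝ → ℝ}
    (h₁ : ∀ t ∈ I, HasDerivAt x₁ (d₁ t) t) (h₂ : ∀ t ∈ I, HasDerivAt x₂ (d₂ t) t)
    (h₁' : ∀ t ∈ I, HasDerivAt (fun s => phi p (d₁ s))
      (-a * phi p (max (x₁ t) 0) + b * phi p (max (-x₁ t) 0)) t)
    (h₂' : ∀ t ∈ I, HasDerivAt (fun s => phi p (d₂ s))
      (-a * phi p (max (x₂ t) 0) + b * phi p (max (-x₂ t) 0)) t)
    {t₀ : ℝ} (ht₀ : t₀ ∈ I) (hx0 : x₁ t₀ = x₂ t₀) (hd0 : d₁ t₀ = d₂ t₀) :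
    ∀ t ∈ I, x₁ t = x₂ t ∧ d₁ t = d₂ t := by
  have hq1 : 1 < q := q_gt_one hp hqc
  have hq0 : (0:ℝ) < q := by linarith
  set E := Ga a b p (x₁ t₀) + |phi p (d₁ t₀)|^q / q with hEdef
  have hE₁ : ∀ t ∈ I, Ga a b p (x₁ t) + |phi p (d₁ t)|^q / q = E := fun t ht =>
    energy_const hp hq1 hqc hI h₁ h₁' ht ht₀
  have hE₂ : ∀ t ∈ I, Ga a b p (x₂ t) + |phi p (d₂ t)|^q / q = E := by
    intro t ht
    have := energy_const hp hq1 hqc hI h₂ h₂' ht ht₀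
    rw [← hx0, ← hd0] at this
    exact this
  -- from Y-equality to d-equality
  have dofY : ∀ t, phi p (d₁ t) = phi p (d₂ t) → d₁ t = d₂ t := by
    intro t h
    have e1 := phi_inv hp hqc (d₁ t)
    have e2 := phi_inv hp hqc (d₂ t)
    rw [← e1, ← e2, h]
  have hFnn : (0:ℝ) ≤ |phi p (d₁ t₀)| ^ q / q := by positivity
  have hGnn := Ga_nonneg (by linarith : (0:ℝ) < p) ha.le hb.le (x₁ t₀)
  have hEnn : (0:ℝ) ≤ E := by rw [hEdef]; linarith
  rcases eq_or_lt_of_le hEnn with hE0 | hEpos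
  · -- zero energy : everything vanishes
    have hzero : ∀ (x d : ℝ → ℝ), (∀ t ∈ I, Ga a b p (x t) + |phi p (d t)|^q / q = E) →
        ∀ t ∈ I, x t = 0 ∧ d t = 0 := by
      intro x d hE t ht
      have h := hE t ht
      rw [← hE0] at h
      have hGa := Ga_nonneg (by linarith : (0:ℝ) < p) ha.le hb.le (x t)
      have hF : (0:ℝ) ≤ |phi p (d t)|^q / q := by positivity
      have hGa0 : Ga a b p (x t) = 0 := by linarith
      have hF0 : |phi p (d t)|^q / q = 0 := by linarith
      constructor
      · have h1 : (0:ℝ) ≤ a * max (x t) 0 ^ p := by positivity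
        have h2 : (0:ℝ) ≤ b * max (-x t) 0 ^ p := by positivity
        have hsum : a * max (x t) 0 ^ p + b * max (-x t) 0 ^ p = 0 := by
          have := hGa0
          rw [Ga, div_eq_zero_iff] at this
          rcases this with h | h
          · exact h
          · linarith
        have hx1 : max (x t) 0 ^ p = 0 := by
          have : a * max (x t) 0 ^ p = 0 := by linarith
          exact (mul_eq_zero.mp this).resolve_left (ne_of_gt ha)
        have hx2 : max (-x t) 0 ^ p = 0 := by
          have : b * max (-x t) 0 ^ p = 0 := by linarith
          exact (mul_eq_zero.mp this).resolve_left (ne_of_gt hb)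
        have e1 : max (x t) 0 = 0 := by
          by_contra hne
          have hpos' : 0 < max (x t) 0 := lt_of_le_of_ne (le_max_right _ _) (Ne.symm hne)
          exact absurd hx1 (ne_of_gt (Real.rpow_pos_of_pos hpos' p))
        have e2 : max (-x t) 0 = 0 := by
          by_contra hne
          have hpos' : 0 < max (-x t) 0 := lt_of_le_of_ne (le_max_right _ _) (Ne.symm hne)
          exact absurd hx2 (ne_of_gt (Real.rpow_pos_of_pos hpos' p))
        have l1 : x t ≤ 0 := by rw [← e1]; exact le_max_left _ _
        have l2 : -x t ≤ 0 := by rw [← e2]; exact le_max_left _ _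
        linarith
      · have habs : |phi p (d t)| = 0 := by
          by_contra hne
          have hpos' : 0 < |phi p (d t)| := lt_of_le_of_ne (abs_nonneg _) (Ne.symm hne)
          have := Real.rpow_pos_of_pos hpos' q
          rw [div_eq_zero_iff] at hF0
          rcases hF0 with h' | h'
          · linarith
          · linarith
        have h0 : phi p (d t) = 0 := abs_eq_zero.mp habs
        have hinv := phi_inv hp hqc (d t)
        rw [h0] at hinv
        rw [← hinv, phi_zero]
    intro t ht
    obtain ⟨a1, b1⟩ := hzero x₁ d₁ hE₁ t ht
    obtain ⟨a2, b2⟩ := hzero x₂ d₂ hE₂ t ht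
    exact ⟨by rw [a1, a2], by rw [b1, b2]⟩
  · -- positive energy : clopen argument
    -- negated data (for the symmetric cases)
    have hn₁ : ∀ t ∈ I, HasDerivAt (fun t => -x₁ t) ((fun t => -d₁ t) t) t := fun t ht =>
      (h₁ t ht).neg
    have hn₂ : ∀ t ∈ I, HasDerivAt (fun t => -x₂ t) ((fun t => -d₂ t) t) t := fun t ht =>
      (h₂ t ht).neg
    have hmkn : ∀ (x d : ℝ → ℝ), (∀ t ∈ I, HasDerivAt (fun s => phi p (d s))
        (-a * phi p (max (x t) 0) + b * phi p (max (-x t) 0)) t) →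
        ∀ t ∈ I, HasDerivAt (fun s => phi p ((fun u => -d u) s))
        (-b * phi p (max ((fun u => -x u) t) 0) + a * phi p (max (-(fun u => -x u) t) 0)) t := by
      intro x d hd t ht
      have heq : (fun s => phi p (-d s)) = fun s => -phi p (d s) :=
        funext fun s => phi_neg p (d s)
      show HasDerivAt (fun s => phi p (-d s)) _ t
      rw [heq]
      have := (hd t ht).neg
      refine this.congr_deriv ?_
      simp only [neg_neg]
      ring
    have hn₁' := hmkn x₁ d₁ h₁'
    have hn₂' := hmkn x₂ d₂ h₂'
    have hmkE : ∀ (x d : ℝ → ℝ), (∀ t ∈ I, Ga a b p (x t) + |phi p (d t)|^q / q = E) →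
        ∀ t ∈ I, Ga b a p ((fun u => -x u) t) + |phi p ((fun u => -d u) t)|^q / q = E := by
      intro x d hE t ht
      show Ga b a p (-x t) + |phi p (-d t)|^q / q = E
      rw [Ga_neg, phi_neg, abs_neg]
      exact hE t ht
    have hnE₁ := hmkE x₁ d₁ hE₁
    have hnE₂ := hmkE x₂ d₂ hE₂
    -- local uniqueness at any point where the solutions agree
    have hlocal : ∀ t₁ ∈ I, x₁ t₁ = x₂ t₁ → phi p (d₁ t₁) = phi p (d₂ t₁) →
        ∃ ε > 0, ∀ t ∈ I ∩ Metric.ball t₁ ε, x₁ t = x₂ t ∧ phi p (d₁ t) = phi p (d₂ t) := by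
      intro t₁ ht₁ hxx hYY
      rcases lt_trichotomy 0 (phi p (d₁ t₁)) with hY | hY | hY
      · exact local_Ypos hp hqc ha hb hI h₁ h₂ hE₁ hE₂ ht₁
          (h₁' t₁ ht₁).continuousAt (h₂' t₁ ht₁).continuousAt hxx hYY hY
      · -- phi p (d₁ t₁) = 0, so x₁ t₁ ≠ 0
        have hxne : x₁ t₁ ≠ 0 := by
          intro h0
          have := hE₁ t₁ ht₁
          rw [h0, ← hY] at this
          simp [Ga, abs_zero, Real.zero_rpow (by linarith : p ≠ 0),
            Real.zero_rpow (by linarith : q ≠ 0)] at this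
          linarith
        rcases lt_or_gt_of_ne hxne with hxneg | hxpos
        · -- x₁ t₁ < 0 : use negated system
          obtain ⟨ε, hε, hconc⟩ := local_Xpos (a := b) (b := a) hp hqc hb ha hI hn₁ hn₂
            hn₁' hn₂' hnE₁ hnE₂ ht₁
            (by show -x₁ t₁ = -x₂ t₁; rw [hxx])
            (by show phi p (-d₁ t₁) = phi p (-d₂ t₁); rw [phi_neg, phi_neg, hYY])
            (by show (0:ℝ) < -x₁ t₁; linarith)
          refine ⟨ε, hε, fun t ht => ?_⟩
          obtain ⟨hh1, hh2⟩ := hconc t ht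
          constructor
          · have : -x₁ t = -x₂ t := hh1
            linarith
          · have : phi p (-d₁ t) = phi p (-d₂ t) := hh2
            rw [phi_neg, phi_neg] at this
            linarith
        · exact local_Xpos hp hqc ha hb hI h₁ h₂ h₁' h₂' hE₁ hE₂ ht₁ hxx hYY hxpos
      · -- phi p (d₁ t₁) < 0 : use negated system
        obtain ⟨ε, hε, hconc⟩ := local_Ypos (a := b) (b := a) hp hqc hb ha hI hn₁ hn₂
          hnE₁ hnE₂ ht₁
          (by show ContinuousAt (fun s => phi p (-d₁ s)) t₁
              have heq : (fun s => phi p (-d₁ s)) = fun s => -phi p (d₁ s) :=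
                funext fun s => phi_neg p (d₁ s)
              rw [heq]
              exact (h₁' t₁ ht₁).continuousAt.neg)
          (by show ContinuousAt (fun s => phi p (-d₂ s)) t₁
              have heq : (fun s => phi p (-d₂ s)) = fun s => -phi p (d₂ s) :=
                funext fun s => phi_neg p (d₂ s)
              rw [heq]
              exact (h₂' t₁ ht₁).continuousAt.neg)
          (by show -x₁ t₁ = -x₂ t₁; rw [hxx])
          (by show phi p (-d₁ t₁) = phi p (-d₂ t₁); rw [phi_neg, phi_neg, hYY])
          (by show (0:ℝ) < phi p (-d₁ t₁); rw [phi_neg]; linarith)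
        refine ⟨ε, hε, fun t ht => ?_⟩
        obtain ⟨hh1, hh2⟩ := hconc t ht
        constructor
        · have : -x₁ t = -x₂ t := hh1
          linarith
        · have : phi p (-d₁ t) = phi p (-d₂ t) := hh2
          rw [phi_neg, phi_neg] at this
          linarith
    -- clopen argument on the subtype
    haveI : PreconnectedSpace I := Subtype.preconnectedSpace hI.isPreconnected
    set A' : Set I := {t : I | x₁ ↑t = x₂ ↑t ∧ phi p (d₁ ↑t) = phi p (d₂ ↑t)} with hA'def
    have hAclosed : IsClosed A' := by
      have c1 : Continuous fun t : I => x₁ ↑t :=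
        ContinuousOn.restrict (fun t ht => (h₁ t ht).continuousAt.continuousWithinAt)
      have c2 : Continuous fun t : I => x₂ ↑t :=
        ContinuousOn.restrict (fun t ht => (h₂ t ht).continuousAt.continuousWithinAt)
      have c3 : Continuous fun t : I => phi p (d₁ ↑t) :=
        ContinuousOn.restrict (fun t ht => (h₁' t ht).continuousAt.continuousWithinAt)
      have c4 : Continuous fun t : I => phi p (d₂ ↑t) :=
        ContinuousOn.restrict (fun t ht => (h₂' t ht).continuousAt.continuousWithinAt)
      exact (isClosed_eq c1 c2).inter (isClosed_eq c3 c4)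
    have hAopen : IsOpen A' := by
      rw [isOpen_iff_mem_nhds]
      rintro ⟨t₁, ht₁⟩ ⟨hxx, hYY⟩
      obtain ⟨ε, hε, hconc⟩ := hlocal t₁ ht₁ hxx hYY
      have hball : Subtype.val ⁻¹' (Metric.ball t₁ ε) ∈ nhds (⟨t₁, ht₁⟩ : I) :=
        continuous_subtype_val.continuousAt.preimage_mem_nhds (Metric.ball_mem_nhds _ hε)
      apply Filter.mem_of_superset hball
      rintro ⟨t, ht⟩ htb
      exact hconc t ⟨ht, htb⟩
    have hAne : A'.Nonempty := ⟨⟨t₀, ht₀⟩, hx0, by rw [hd0]⟩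
    have hAuniv : A' = Set.univ := IsClopen.eq_univ ⟨hAclosed, hAopen⟩ hAne
    intro t ht
    have hmem : (⟨t, ht⟩ : I) ∈ A' := by rw [hAuniv]; trivial
    exact ⟨hmem.1, dofY t hmem.2⟩

end AuxV

set_option maxHeartbeats 2000000

/-- The solution `v` of `(φ_p(v'))' + a₁ φ_p(v⁺) − b₁ φ_p(v⁻) = 0`,
`v(0) = (p−1)^{1/p}`, `v'(0) = 0`, is given explicitly in terms of `sin_p`
(the solution `S` of `(φ_p(S'))' + φ_p(S) = 0`, `S(0)=0`, `S'(0)=1`) by: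
`v(t) = sin_p(a₁^{1/p} t + π_p/2)` on `[0, π_p/(2a₁^{1/p})]`,
`v(t) = −(a₁/b₁)^{1/p} sin_p(b₁^{1/p}(t − π_p/(2a₁^{1/p})))` on `(π_p/(2a₁^{1/p}), π_p]`,
and `v(2π_p − t) = v(t)` on `[π_p, 2π_p]`. -/
theorem explicit_formula_for_v
    (p q a₁ b₁ : ℝ) (S S' v v' : ℝ → ℝ)
    (hp : 2 ≤ p) (hq : q = p / (p - 1))
    (ha₁ : 0 < a₁) (hb₁ : 0 < b₁)
    (hab : a₁ ^ (-(1 : ℝ) / p) + b₁ ^ (-(1 : ℝ) / p) = 2)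
    -- `S = sin_p`
    (hS : ∀ t, HasDerivAt S (S' t) t)
    (hSode : ∀ t, HasDerivAt (fun s => phi p (S' s)) (-phi p (S t)) t)
    (hS0 : S 0 = 0) (hS'0 : S' 0 = 1)
    (hSper : Function.Periodic S (2 * pip p)) (hSodd : ∀ t, S (-t) = -S t)
    -- `v`
    (hv : ∀ t, HasDerivAt v (v' t) t)
    (hode : ∀ t, HasDerivAt (fun s => phi p (v' s))
      (-a₁ * phi p (max (v t) 0) + b₁ * phi p (max (-v t) 0)) t)
    (hv0 : v 0 = (p - 1) ^ (1 / p)) (hv'0 : v' 0 = 0) :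
    (∀ t : ℝ, 0 ≤ t → t ≤ pip p / (2 * a₁ ^ (1 / p)) →
        v t = S (a₁ ^ (1 / p) * t + pip p / 2)) ∧
    (∀ t : ℝ, pip p / (2 * a₁ ^ (1 / p)) < t → t ≤ pip p →
        v t = -(a₁ / b₁) ^ (1 / p) * S (b₁ ^ (1 / p) * (t - pip p / (2 * a₁ ^ (1 / p))))) ∧
    (∀ t : ℝ, t ∈ Set.Icc (pip p) (2 * pip p) → v (2 * pip p - t) = v t) := by
  have hp1 : (1:ℝ) < p := by linarith
  have hp0 : (0:ℝ) < p := by linarith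
  have hq1 : 1 < q := AuxV.q_gt_one hp1 hq
  have hq0 : (0:ℝ) < q := by linarith
  set M : ℝ := (p - 1) ^ ((1:ℝ)/p) with hMdef
  have hM1 : (1:ℝ) ≤ M := Real.one_le_rpow (by linarith) (by positivity)
  have hM0 : (0:ℝ) < M := by linarith
  have hsin : 0 < Real.sin (Real.pi / p) :=
    Real.sin_pos_of_pos_of_lt_pi (by positivity) (div_lt_self Real.pi_pos hp1)
  have hpipM : pip p = 2 * Real.pi * M / (p * Real.sin (Real.pi / p)) := by rw [pip, hMdef]
  have hpip : 0 < pip p := by rw [hpipM]; positivity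
  have hjordan : 2 ≤ p * Real.sin (Real.pi / p) := by
    have hle : Real.pi / p ≤ Real.pi / 2 :=
      div_le_div_of_nonneg_left Real.pi_pos.le (by norm_num) hp
    have hj := Real.mul_le_sin (x := Real.pi / p) (by positivity) hle
    have h2p : 2/Real.pi * (Real.pi/p) = 2/p := by
      field_simp
    rw [h2p] at hj
    rw [div_le_iff₀ hp0] at hj
    linarith [mul_comm (Real.sin (Real.pi / p)) p]
  -- π_p ≤ π * M < 4 * M
  have hpipM4 : pip p < 4 * M := by
    have h1 : pip p ≤ 2 * Real.pi * M / 2 := by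
      rw [hpipM]
      apply div_le_div_of_nonneg_left (by positivity) (by norm_num) hjordan
    have h2 : Real.pi < 4 := by linarith [Real.pi_lt_d2]
    calc pip p ≤ Real.pi * M := by linarith
    _ < 4 * M := by nlinarith
  -- S as a solution of the (1,1) system
  have hSf : ∀ t ∈ (Set.univ : Set ℝ), HasDerivAt S (S' t) t := fun t _ => hS t
  have hfield : ∀ x : ℝ, -(1:ℝ) * phi p (max x 0) + 1 * phi p (max (-x) 0) = -phi p x := by
    intro x
    rw [AuxV.phi_decomp hp1 x, AuxV.phi_of_nonneg hp1 (le_max_right x 0),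
      AuxV.phi_of_nonneg hp1 (le_max_right (-x) 0)]
    ring
  have hSf' : ∀ t ∈ (Set.univ : Set ℝ), HasDerivAt (fun s => phi p (S' s))
      (-(1:ℝ) * phi p (max (S t) 0) + 1 * phi p (max (-S t) 0)) t := by
    intro t _
    rw [hfield (S t)]
    exact hSode t
  -- energy of S
  have hGa0 : AuxV.Ga 1 1 p 0 = 0 := by
    simp [AuxV.Ga, Real.zero_rpow (ne_of_gt hp0)]
  have hES : ∀ t : ℝ, AuxV.Ga 1 1 p (S t) + |phi p (S' t)| ^ q / q = 1/q := by
    intro t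
    have := AuxV.energy_const hp1 hq1 hq convex_univ hSf hSf'
      (Set.mem_univ t) (Set.mem_univ 0)
    rw [hS0, hS'0, hGa0, AuxV.phi_one hp1] at this
    simpa using this
  have hGa11 : ∀ x : ℝ, AuxV.Ga 1 1 p x = |x| ^ p / p := by
    intro x
    rcases le_total 0 x with h | h
    · rw [AuxV.Ga, abs_of_nonneg h, max_eq_left h, max_eq_right (by linarith),
        Real.zero_rpow (ne_of_gt hp0)]
      ring
    · rw [AuxV.Ga, abs_of_nonpos h, max_eq_right h, max_eq_left (by linarith),
        Real.zero_rpow (ne_of_gt hp0)]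
      ring
  have hpq : p / q = p - 1 := by rw [hq]; field_simp
  have hSle : ∀ t, |S t| ≤ M := by
    intro t
    have h := hES t
    have h2 : (0:ℝ) ≤ |phi p (S' t)| ^ q / q := by positivity
    rw [hGa11] at h
    have h3 : |S t| ^ p ≤ p - 1 := by
      have : |S t| ^ p / p ≤ 1/q := by linarith
      rw [div_le_div_iff₀ hp0 hq0] at this
      calc |S t| ^ p ≤ p / q := by rw [le_div_iff₀ hq0]; linarith
      _ = p - 1 := hpq
    calc |S t| = (|S t| ^ p) ^ ((1:ℝ)/p) := by
          rw [← Real.rpow_mul (abs_nonneg _), mul_one_div_cancel (ne_of_gt hp0),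
            Real.rpow_one]
    _ ≤ M := by
          rw [hMdef]
          exact Real.rpow_le_rpow (Real.rpow_nonneg (abs_nonneg _) _) h3 (by positivity)
  have hS'le : ∀ t, |S' t| ≤ 1 := by
    intro t
    have h := hES t
    have h2 : (0:ℝ) ≤ AuxV.Ga 1 1 p (S t) := AuxV.Ga_nonneg hp0 zero_le_one zero_le_one _
    have h3 : |phi p (S' t)| ^ q ≤ 1 := by
      have : |phi p (S' t)| ^ q / q ≤ 1/q := by linarith
      rw [div_le_div_iff₀ hq0 hq0] at this
      nlinarith
    have h4 : |phi p (S' t)| ≤ 1 := by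
      by_contra hgt
      push_neg at hgt
      have hlt := Real.rpow_lt_rpow zero_le_one hgt hq0
      rw [Real.one_rpow] at hlt
      linarith
    calc |S' t| = |phi q (phi p (S' t))| := by rw [AuxV.phi_inv hp1 hq]
    _ = |phi p (S' t)| ^ (q - 1) := AuxV.abs_phi hq1 _
    _ ≤ 1 := Real.rpow_le_one (abs_nonneg _) h4 (by linarith)
  have hS'c : Continuous S' := by
    have h1 : Continuous (fun t => phi p (S' t)) :=
      continuous_iff_continuousAt.2 fun t => (hSode t).continuousAt
    have h2 : S' = fun t => phi q (phi p (S' t)) :=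
      funext fun t => (AuxV.phi_inv hp1 hq (S' t)).symm
    rw [h2]
    exact (AuxV.continuous_phi hq1).comp h1
  -- first zero of S' : existence
  have hZex : ∃ t : ℝ, 0 ≤ t ∧ S' t = 0 := by
    by_contra hno
    push_neg at hno
    have hpos : ∀ t, 0 ≤ t → 0 < S' t := by
      intro t ht
      rcases lt_trichotomy 0 (S' t) with h | h | h
      · exact h
      · exact absurd h.symm (hno t ht)
      · exfalso
        have h01 : (0:ℝ) ≤ t := ht
        have : (0:ℝ) ∈ Set.Icc (S' t) (S' 0) :=
          ⟨by linarith, by rw [hS'0]; norm_num⟩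
        obtain ⟨c, hc, hc0⟩ := intermediate_value_Icc' h01 hS'c.continuousOn this
        exact hno c hc.1 hc0
    have hmono : StrictMonoOn S (Set.Icc 0 (2 * pip p)) := by
      apply strictMonoOn_of_deriv_pos (convex_Icc _ _) (fun t _ => (hS t).continuousAt.continuousWithinAt)
      intro t ht
      rw [interior_Icc] at ht
      rw [(hS t).deriv]
      exact hpos t ht.1.le
    have h1 : S 0 < S (2 * pip p) :=
      hmono ⟨le_refl 0, by positivity⟩ ⟨by positivity, le_refl _⟩ (by positivity)
    have h2 : S (2 * pip p) = S 0 := by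
      have := hSper 0
      simpa using this
    rw [h2] at h1
    exact lt_irrefl _ h1
  set Z : Set ℝ := Set.Ici 0 ∩ S' ⁻¹' {0} with hZdef
  have hZclosed : IsClosed Z := isClosed_Ici.inter (isClosed_singleton.preimage hS'c)
  have hZne : Z.Nonempty := by
    obtain ⟨t, ht0, ht⟩ := hZex
    exact ⟨t, ht0, ht⟩
  have hZbdd : BddBelow Z := ⟨0, fun z hz => hz.1⟩
  set T : ℝ := sInf Z with hTdef
  have hTmem : T ∈ Z := hZclosed.csInf_mem hZne hZbdd
  have hT0 : 0 ≤ T := hTmem.1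
  have hS'T : S' T = 0 := hTmem.2
  have hTpos : 0 < T := by
    rcases eq_or_lt_of_le hT0 with h | h
    · exfalso
      have := hS'T
      rw [← h, hS'0] at this
      norm_num at this
    · exact h
  have hS'posT : ∀ t, 0 ≤ t → t < T → 0 < S' t := by
    intro t ht0 htT
    rcases lt_trichotomy 0 (S' t) with h | h | h
    · exact h
    · exfalso
      have : t ∈ Z := ⟨ht0, h.symm⟩
      have := csInf_le hZbdd this
      linarith [hTdef]
    · exfalso
      have : (0:ℝ) ∈ Set.Icc (S' t) (S' 0) :=
        ⟨by linarith, by rw [hS'0]; norm_num⟩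
      obtain ⟨c, hc, hc0⟩ := intermediate_value_Icc' ht0 hS'c.continuousOn this
      have : c ∈ Z := ⟨hc.1, hc0⟩
      have := csInf_le hZbdd this
      linarith [hc.2]
  have hSmono : StrictMonoOn S (Set.Icc 0 T) := by
    apply strictMonoOn_of_deriv_pos (convex_Icc _ _)
      (fun t _ => (hS t).continuousAt.continuousWithinAt)
    intro t ht
    rw [interior_Icc] at ht
    rw [(hS t).deriv]
    exact hS'posT t ht.1.le ht.2
  have hSTpos : 0 < S T := by
    have := hSmono (Set.left_mem_Icc.mpr hT0) (Set.right_mem_Icc.mpr hT0) hTpos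
    rwa [hS0] at this
  have hST : S T = M := by
    have h := hES T
    rw [hGa11, hS'T, AuxV.phi_zero, abs_zero, Real.zero_rpow (ne_of_gt hq0)] at h
    have hSTp : S T ^ p = p - 1 := by
      have : |S T| ^ p / p = 1/q := by
        field_simp at h ⊢
        linarith
      rw [abs_of_pos hSTpos] at this
      rw [div_eq_div_iff (ne_of_gt hp0) (ne_of_gt hq0)] at this
      have hq' : S T ^ p * q = p := by linarith
      have : S T ^ p = p / q := by
        rw [eq_div_iff (ne_of_gt hq0)]
        linarith
      rw [this, hpq]
    rw [hMdef, ← hSTp, ← Real.rpow_mul hSTpos.le, mul_one_div_cancel (ne_of_gt hp0),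
      Real.rpow_one]
  have hTM : M ≤ T := by
    have hderiv : ∀ u ∈ Set.Icc (0:ℝ) T, HasDerivWithinAt S (S' u) (Set.Icc 0 T) u :=
      fun u _ => (hS u).hasDerivWithinAt
    have hbd : ∀ u ∈ Set.Icc (0:ℝ) T, ‖S' u‖ ≤ 1 := fun u _ => by
      rw [Real.norm_eq_abs]; exact hS'le u
    have := Convex.norm_image_sub_le_of_norm_hasDerivWithin_le hderiv hbd (convex_Icc _ _)
      (Set.left_mem_Icc.mpr hT0) (Set.right_mem_Icc.mpr hT0)
    rw [hST, hS0, sub_zero, sub_zero, Real.norm_eq_abs, Real.norm_eq_abs,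
      abs_of_pos hM0, abs_of_pos hTpos, one_mul] at this
    exact this
  -- generic uniqueness against S
  have huniqS : ∀ (x₂ d₂ : ℝ → ℝ), (∀ t, HasDerivAt x₂ (d₂ t) t) →
      (∀ t, HasDerivAt (fun s => phi p (d₂ s)) (-phi p (x₂ t)) t) →
      ∀ t₀, S t₀ = x₂ t₀ → S' t₀ = d₂ t₀ → ∀ t, S t = x₂ t ∧ S' t = d₂ t := by
    intro x₂ d₂ h2 h2' t₀ he hd t
    have h₂' : ∀ u ∈ Set.univ, HasDerivAt (fun s => phi p (d₂ s))
        (-(1:ℝ) * phi p (max (x₂ u) 0) + 1 * phi p (max (-x₂ u) 0)) u := by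
      intro u _
      rw [hfield (x₂ u)]
      exact h2' u
    exact AuxV.uniq hp1 hq one_pos one_pos convex_univ hSf (fun u _ => h2 u) hSf' h₂'
      (Set.mem_univ t₀) he hd t (Set.mem_univ t)
  -- reflection about T
  have hrefl : ∀ t, S t = S (2*T - t) ∧ S' t = -S' (2*T - t) := by
    apply huniqS (fun u => S (2*T - u)) (fun u => -S' (2*T - u))
    · intro t
      have hlin : HasDerivAt (fun u : ℝ => 2*T - u) (-1) t := by
        simpa using (hasDerivAt_id t).const_sub (2*T)
      have := (hS (2*T - t)).comp t hlin
      simpa [Function.comp_def] using this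
    · intro t
      have heq : (fun s => phi p (-S' (2*T - s))) = fun s => -phi p (S' (2*T - s)) :=
        funext fun s => AuxV.phi_neg p _
      rw [heq]
      have hlin : HasDerivAt (fun u : ℝ => 2*T - u) (-1) t := by
        simpa using (hasDerivAt_id t).const_sub (2*T)
      have := ((hSode (2*T - t)).comp t hlin).neg
      simpa [Function.comp_def, Pi.neg_def] using this
    · rw [show 2*T - T = T by ring]
    · rw [show 2*T - T = T by ring, hS'T]
      norm_num
  have hS2T : S (2*T) = 0 := by
    have := (hrefl 0).1
    rw [hS0, sub_zero] at this
    exact this.symm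
  have hS'2T : S' (2*T) = -1 := by
    have := (hrefl 0).2
    rw [hS'0, sub_zero] at this
    linarith
  -- antiperiodicity with antiperiod 2T
  have hanti : ∀ t, S t = -S (t - 2*T) ∧ S' t = -S' (t - 2*T) := by
    apply huniqS (fun u => -S (u - 2*T)) (fun u => -S' (u - 2*T))
    · intro t
      have hlin : HasDerivAt (fun u : ℝ => u - 2*T) 1 t := by
        simpa using (hasDerivAt_id t).sub_const (2*T)
      have := ((hS (t - 2*T)).comp t hlin).neg
      simpa [Function.comp_def, Pi.neg_def] using this
    · intro t
      have heq : (fun s => phi p (-S' (s - 2*T))) = fun s => -phi p (S' (s - 2*T)) :=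
        funext fun s => AuxV.phi_neg p _
      rw [heq]
      have hlin : HasDerivAt (fun u : ℝ => u - 2*T) 1 t := by
        simpa using (hasDerivAt_id t).sub_const (2*T)
      have := ((hSode (t - 2*T)).comp t hlin).neg
      have hval : -(-phi p (S (t - 2*T)) * 1) = -phi p (-S (t - 2*T)) := by
        rw [AuxV.phi_neg]
        ring
      rw [hval] at this
      exact this
    · rw [show 2*T - 2*T = 0 by ring, hS0, hS2T]
      norm_num
    · rw [show 2*T - 2*T = 0 by ring, hS'0, hS'2T]
  have hanti' : ∀ t, S (t + 2*T) = -S t := by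
    intro t
    have := (hanti (t + 2*T)).1
    rw [add_sub_cancel_right] at this
    linarith
  have habsper : Function.Periodic (fun u => |S u|) (2*T) := by
    intro u
    simp only [hanti' u, abs_neg]
  have hSpos2T : ∀ t, 0 < t → t < 2*T → 0 < S t := by
    intro t ht0 ht2
    rcases le_total t T with h | h
    · have := hSmono (Set.left_mem_Icc.mpr hT0) ⟨ht0.le, h⟩ ht0
      rwa [hS0] at this
    · have h1 := (hrefl t).1
      have h2 : 0 < S (2*T - t) := by
        have := hSmono (Set.left_mem_Icc.mpr hT0)
          (⟨by linarith, by linarith⟩ : 2*T - t ∈ Set.Icc 0 T) (by linarith)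
        rwa [hS0] at this
      rw [h1]
      exact h2
  -- zeros of S are exactly the multiples of 2T
  have hzeros : ∀ t, S t = 0 → ∃ k : ℤ, t = 2*T * k := by
    intro t ht
    have h2T : (0:ℝ) < 2*T := by linarith
    set n : ℤ := ⌊t / (2*T)⌋ with hndef
    have hn1 : (n:ℝ) * (2*T) ≤ t := (le_div_iff₀ h2T).1 (Int.floor_le _)
    have hn2 : t < ((n:ℝ) + 1) * (2*T) := (div_lt_iff₀ h2T).1 (Int.lt_floor_add_one _)
    set s : ℝ := t - (n:ℝ) * (2*T) with hsdef
    have habs : |S s| = |S t| := habsper.sub_int_mul_eq n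
    rcases eq_or_lt_of_le (by linarith : (0:ℝ) ≤ s) with h0 | h0
    · exact ⟨n, by rw [mul_comm]; linarith⟩
    · exfalso
      have hs2 : s < 2*T := by linarith
      have := hSpos2T s h0 hs2
      rw [ht, abs_zero, abs_eq_zero] at habs
      linarith [habs]
  -- iterated antiperiodicity
  have hiter : ∀ (m : ℕ) (t : ℝ), S (t + 2*T*m) = (-1)^m * S t := by
    intro m
    induction m with
    | zero => intro t; simp
    | succ m ih =>
      intro t
      have h1 : t + 2*T*(m+1 : ℕ) = (t + 2*T*m) + 2*T := by push_cast; ring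
      rw [h1, hanti', ih]
      push_cast
      ring
  -- pin down T = pip p / 2
  have hT2 : 2*T = pip p := by
    have hper0 : S (2 * pip p) = 0 := by
      have := hSper 0
      rw [zero_add, hS0] at this
      exact this
    obtain ⟨k, hk⟩ := hzeros _ hper0
    have h2T : (0:ℝ) < 2*T := by linarith
    have hkpos : 0 < k := by
      by_contra hneg
      push_neg at hneg
      have hkr : (k:ℝ) ≤ 0 := by exact_mod_cast hneg
      have h1 : 2*T*(k:ℝ) ≤ 2*T*0 := mul_le_mul_of_nonneg_left hkr (by linarith)
      rw [mul_zero] at h1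
      linarith
    have hkeven : ¬ Odd k := by
      intro hodd
      have hktoNat : ((k.toNat : ℕ) : ℝ) = (k:ℝ) := by
        exact_mod_cast Int.toNat_of_nonneg hkpos.le
      have hTper : ∀ t, S (t + 2 * pip p) = -S t := by
        intro t
        have h1 : t + 2 * pip p = t + 2*T*(k.toNat : ℕ) := by
          rw [hktoNat]
          linarith
        rw [h1, hiter]
        have hoddn : Odd (k.toNat) := by
          rcases hodd with ⟨j, hj⟩
          refine ⟨j.toNat, ?_⟩
          omega
        rw [hoddn.neg_one_pow]
        ring
      have hcontr := hTper T
      rw [hSper T, hST] at hcontr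
      linarith
    have hkeven' : Even k := Int.not_odd_iff_even.mp hkeven
    have hklt : k < 4 := by
      have h1 : 2*T*(k:ℝ) < 2*T*4 := by
        rw [← hk]
        linarith [hpipM4, hTM]
      have h2 : (k:ℝ) < 4 := (mul_lt_mul_iff_right₀ h2T).mp h1
      exact_mod_cast h2
    have hk2 : k = 2 := by
      rcases hkeven' with ⟨j, hj⟩
      omega
    rw [hk2] at hk
    push_cast at hk
    linarith
  -- S facts in terms of pip p
  have hShalf : S (pip p / 2) = M := by rw [show pip p / 2 = T by linarith]; exact hST
  have hS'half : S' (pip p / 2) = 0 := by rw [show pip p / 2 = T by linarith]; exact hS'T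
  have hSpi : S (pip p) = 0 := by rw [← hT2]; exact hS2T
  have hS'pi : S' (pip p) = -1 := by rw [← hT2]; exact hS'2T
  have hreflpi : ∀ s, S (pip p - s) = S s := by
    intro s
    have := (hrefl s).1
    rw [hT2] at this
    exact this.symm
  have hSnonneg : ∀ s, 0 ≤ s → s ≤ pip p → 0 ≤ S s := by
    intro s h0 h1
    rcases eq_or_lt_of_le h0 with h | h
    · rw [← h, hS0]
    rcases eq_or_lt_of_le h1 with h' | h'
    · rw [h', hSpi]
    · exact (hSpos2T s h (by linarith)).le
  -- scaling constants
  set α : ℝ := a₁ ^ ((1:ℝ)/p) with hαdef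
  set β : ℝ := b₁ ^ ((1:ℝ)/p) with hβdef
  have hα0 : 0 < α := Real.rpow_pos_of_pos ha₁ _
  have hβ0 : 0 < β := Real.rpow_pos_of_pos hb₁ _
  have hαp : α ^ p = a₁ := by
    rw [hαdef, ← Real.rpow_mul ha₁.le, one_div_mul_cancel (ne_of_gt hp0), Real.rpow_one]
  have hβp : β ^ p = b₁ := by
    rw [hβdef, ← Real.rpow_mul hb₁.le, one_div_mul_cancel (ne_of_gt hp0), Real.rpow_one]
  have hab2 : α⁻¹ + β⁻¹ = 2 := by
    have h1 : a₁ ^ (-1/p) = α⁻¹ := by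
      rw [show (-1)/p = -(1/p) by ring, Real.rpow_neg ha₁.le, hαdef]
    have h2 : b₁ ^ (-1/p) = β⁻¹ := by
      rw [show (-1)/p = -(1/p) by ring, Real.rpow_neg hb₁.le, hβdef]
    rw [← h1, ← h2]
    exact hab
  have hαhalf : 1/2 < α := by
    have hinv : α⁻¹ < 2 := by
      have : 0 < β⁻¹ := by positivity
      linarith
    have h1 : α⁻¹ * α < 2 * α := mul_lt_mul_of_pos_right hinv hα0
    rw [inv_mul_cancel₀ (ne_of_gt hα0)] at h1
    linarith
  have hβinv : β⁻¹ = 2 - α⁻¹ := by linarith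
  set γ : ℝ := (a₁ / b₁) ^ ((1:ℝ)/p) with hγdef
  have hγ : γ = α / β := by
    rw [hγdef, Real.div_rpow ha₁.le hb₁.le, hαdef, hβdef]
  have hγ0 : 0 < γ := by rw [hγ]; positivity
  have hγβ : γ * β = α := by
    rw [hγ, div_mul_cancel₀ _ (ne_of_gt hβ0)]
  set T1 : ℝ := pip p / (2 * α) with hT1def
  have hT1pos : 0 < T1 := by rw [hT1def]; positivity
  have hαT1 : α * T1 = pip p / 2 := by
    rw [hT1def]
    field_simp
  set E2 : ℝ := T1 + pip p / β with hE2def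
  have hβE2 : β * (E2 - T1) = pip p := by
    rw [hE2def]
    field_simp
    ring
  have hE2form : E2 = pip p * (2 - α⁻¹ / 2) := by
    rw [hE2def, hT1def, div_eq_mul_inv (pip p) β, hβinv]
    field_simp
    ring
  have hπE2 : pip p ≤ E2 := by
    rw [hE2form]
    have h1 : α⁻¹ / 2 ≤ 1 := by
      have h2 : 0 < β⁻¹ := by positivity
      linarith only [hab2, h2]
    have h3 := mul_le_mul_of_nonneg_left (by linarith only [h1] : (1:ℝ) ≤ 2 - α⁻¹/2) hpip.le
    linarith only [h3]
  have h2pE2 : 2 * pip p - E2 = T1 := by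
    rw [hE2form, hT1def]
    field_simp
    ring
  -- generic uniqueness against v
  have huniqV : ∀ (I : Set ℝ), Convex ℝ I → ∀ (x₂ d₂ : ℝ → ℝ),
      (∀ t ∈ I, HasDerivAt x₂ (d₂ t) t) →
      (∀ t ∈ I, HasDerivAt (fun s => phi p (d₂ s))
        (-a₁ * phi p (max (x₂ t) 0) + b₁ * phi p (max (-x₂ t) 0)) t) →
      ∀ t₀ ∈ I, v t₀ = x₂ t₀ → v' t₀ = d₂ t₀ → ∀ t ∈ I, v t = x₂ t ∧ v' t = d₂ t := by
    intro I hI x₂ d₂ h2 h2' t₀ ht₀ he hd t ht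
    exact AuxV.uniq hp1 hq ha₁ hb₁ hI (fun u _ => hv u) h2 (fun u _ => hode u) h2'
      ht₀ he hd t ht
  -- piece 1 : v on [-T1, T1]
  have hlin1 : ∀ c t : ℝ, HasDerivAt (fun u : ℝ => α * u + c) α t := by
    intro c t
    simpa using ((hasDerivAt_id t).const_mul α).add_const c
  have hpiece1 : ∀ t ∈ Set.Icc (-T1) T1,
      v t = S (α * t + pip p / 2) ∧ v' t = α * S' (α * t + pip p / 2) := by
    apply huniqV _ (convex_Icc _ _)
    · intro t _
      have := (hS (α * t + pip p / 2)).comp t (hlin1 (pip p / 2) t)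
      simpa [mul_comm, Function.comp_def] using this
    · intro t ht
      have hw0 : 0 ≤ α * t + pip p / 2 := by
        have h5 := mul_le_mul_of_nonneg_left ht.1 hα0.le
        linarith only [h5, hαT1]
      have hw1 : α * t + pip p / 2 ≤ pip p := by
        have h5 := mul_le_mul_of_nonneg_left ht.2 hα0.le
        linarith only [h5, hαT1]
      have hSw : 0 ≤ S (α * t + pip p / 2) := hSnonneg _ hw0 hw1
      have heq : (fun s => phi p (α * S' (α * s + pip p / 2)))
          = fun s => α ^ (p-1) * phi p (S' (α * s + pip p / 2)) :=
        funext fun s => AuxV.phi_mul_of_pos hp1 hα0 _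
      rw [heq]
      have hd := ((hSode (α * t + pip p / 2)).comp t (hlin1 (pip p / 2) t)).const_mul
        (α ^ (p-1))
      have hval : α ^ (p-1) * (-phi p (S (α * t + pip p / 2)) * α)
          = -a₁ * phi p (max (S (α * t + pip p / 2)) 0)
            + b₁ * phi p (max (-S (α * t + pip p / 2)) 0) := by
        rw [max_eq_left hSw, max_eq_right (by linarith : -S (α * t + pip p / 2) ≤ 0),
          AuxV.phi_zero, mul_zero, add_zero]
        have hαα : α ^ (p-1) * α = a₁ := by
          rw [← Real.rpow_add_one (ne_of_gt hα0), sub_add_cancel, hαp]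
        calc α ^ (p-1) * (-phi p (S (α * t + pip p / 2)) * α)
            = -(α ^ (p-1) * α) * phi p (S (α * t + pip p / 2)) := by ring
        _ = -a₁ * phi p (S (α * t + pip p / 2)) := by rw [hαα]
      rw [hval] at hd
      exact hd
    · exact ⟨(by linarith only [hT1pos] : -T1 ≤ (0:ℝ)), hT1pos.le⟩
    · rw [hv0]
      norm_num [hShalf]
    · rw [hv'0]
      norm_num [hS'half]
  have hvT1 : v T1 = 0 := by
    have := (hpiece1 T1 ⟨by linarith, le_refl _⟩).1
    rw [this, show α * T1 + pip p / 2 = pip p by linarith [hαT1], hSpi]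
  have hv'T1 : v' T1 = -α := by
    have := (hpiece1 T1 ⟨by linarith, le_refl _⟩).2
    rw [this, show α * T1 + pip p / 2 = pip p by linarith [hαT1], hS'pi]
    ring
  -- piece 2 : v on [T1, E2]
  have hlin2 : ∀ t : ℝ, HasDerivAt (fun u : ℝ => β * (u - T1)) β t := by
    intro t
    simpa using ((hasDerivAt_id t).sub_const T1).const_mul β
  have hpiece2 : ∀ t ∈ Set.Icc T1 E2,
      v t = -γ * S (β * (t - T1)) ∧ v' t = -(γ * β) * S' (β * (t - T1)) := by
    apply huniqV _ (convex_Icc _ _)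
    · intro t _
      have := ((hS (β * (t - T1))).comp t (hlin2 t)).const_mul (-γ)
      refine this.congr_deriv ?_
      ring
    · intro t ht
      have hw0 : 0 ≤ β * (t - T1) := by
        have : (0:ℝ) ≤ t - T1 := by linarith [ht.1]
        positivity
      have hw1 : β * (t - T1) ≤ pip p := by
        rw [← hβE2]
        have : t - T1 ≤ E2 - T1 := by linarith [ht.2]
        exact mul_le_mul_of_nonneg_left this hβ0.le
      have hSw : 0 ≤ S (β * (t - T1)) := hSnonneg _ hw0 hw1
      have heq : (fun s => phi p (-(γ * β) * S' (β * (s - T1))))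
          = fun s => -((γ * β) ^ (p-1) * phi p (S' (β * (s - T1)))) := by
        funext s
        rw [show -(γ * β) * S' (β * (s - T1)) = -((γ * β) * S' (β * (s - T1))) by ring,
          AuxV.phi_neg, AuxV.phi_mul_of_pos hp1 (by positivity : (0:ℝ) < γ * β)]
      rw [heq]
      have hd := (((hSode (β * (t - T1))).comp t (hlin2 t)).const_mul
        ((γ * β) ^ (p-1))).neg
      have hval : -((γ * β) ^ (p-1) * (-phi p (S (β * (t - T1))) * β))
          = -a₁ * phi p (max (-γ * S (β * (t - T1))) 0)
            + b₁ * phi p (max (-(-γ * S (β * (t - T1)))) 0) := by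
        have hx2 : -γ * S (β * (t - T1)) ≤ 0 := by
          have : 0 ≤ γ * S (β * (t - T1)) := by positivity
          linarith
        rw [max_eq_right hx2, AuxV.phi_zero, mul_zero, zero_add,
          max_eq_left (by linarith : 0 ≤ -(-γ * S (β * (t - T1))))]
        rw [show -(-γ * S (β * (t - T1))) = γ * S (β * (t - T1)) by ring,
          AuxV.phi_mul_of_pos hp1 hγ0]
        have h1 : (γ * β) ^ (p-1) = γ ^ (p-1) * β ^ (p-1) :=
          Real.mul_rpow hγ0.le hβ0.le
        have h2 : β ^ (p-1) * β = b₁ := by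
          rw [← Real.rpow_add_one (ne_of_gt hβ0), sub_add_cancel, hβp]
        rw [h1]
        calc -(γ ^ (p-1) * β ^ (p-1) * (-phi p (S (β * (t - T1))) * β))
            = (β ^ (p-1) * β) * (γ ^ (p-1) * phi p (S (β * (t - T1)))) := by ring
        _ = b₁ * (γ ^ (p-1) * phi p (S (β * (t - T1)))) := by rw [h2]
      rw [hval] at hd
      exact hd
    · exact ⟨le_refl _, by linarith [hπE2, hT1pos, hpip]⟩
    · rw [hvT1]
      norm_num [hS0]
    · rw [hv'T1]
      rw [show β * (T1 - T1) = 0 by ring, hS'0, hγβ]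
      ring
  have hvE2 : v E2 = 0 := by
    have := (hpiece2 E2 ⟨by linarith [hπE2, hpip], le_refl _⟩).1
    rw [this, show β * (E2 - T1) = pip p from hβE2, hSpi]
    ring
  have hv'E2 : v' E2 = α := by
    have := (hpiece2 E2 ⟨by linarith [hπE2, hpip], le_refl _⟩).2
    rw [this, show β * (E2 - T1) = pip p from hβE2, hS'pi, hγβ]
    ring
  -- piece 3 : v on [E2, E2 + 2*T1]
  have hlin3 : ∀ t : ℝ, HasDerivAt (fun u : ℝ => α * (u - E2)) α t := by
    intro t
    simpa using ((hasDerivAt_id t).sub_const E2).const_mul α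
  have hpiece3 : ∀ t ∈ Set.Icc E2 (E2 + 2*T1),
      v t = S (α * (t - E2)) ∧ v' t = α * S' (α * (t - E2)) := by
    apply huniqV _ (convex_Icc _ _)
    · intro t _
      have := (hS (α * (t - E2))).comp t (hlin3 t)
      simpa [mul_comm, Function.comp_def] using this
    · intro t ht
      have hw0 : 0 ≤ α * (t - E2) := by
        have : (0:ℝ) ≤ t - E2 := by linarith [ht.1]
        positivity
      have hw1 : α * (t - E2) ≤ pip p := by
        have h1 : t - E2 ≤ 2*T1 := by linarith only [ht.2]
        have h5 := mul_le_mul_of_nonneg_left h1 hα0.le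
        linarith only [h5, hαT1]
      have hSw : 0 ≤ S (α * (t - E2)) := hSnonneg _ hw0 hw1
      have heq : (fun s => phi p (α * S' (α * (s - E2))))
          = fun s => α ^ (p-1) * phi p (S' (α * (s - E2))) :=
        funext fun s => AuxV.phi_mul_of_pos hp1 hα0 _
      rw [heq]
      have hd := ((hSode (α * (t - E2))).comp t (hlin3 t)).const_mul (α ^ (p-1))
      have hval : α ^ (p-1) * (-phi p (S (α * (t - E2))) * α)
          = -a₁ * phi p (max (S (α * (t - E2))) 0)
            + b₁ * phi p (max (-S (α * (t - E2))) 0) := by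
        rw [max_eq_left hSw, max_eq_right (by linarith : -S (α * (t - E2)) ≤ 0),
          AuxV.phi_zero, mul_zero, add_zero]
        have hαα : α ^ (p-1) * α = a₁ := by
          rw [← Real.rpow_add_one (ne_of_gt hα0), sub_add_cancel, hαp]
        calc α ^ (p-1) * (-phi p (S (α * (t - E2))) * α)
            = -(α ^ (p-1) * α) * phi p (S (α * (t - E2))) := by ring
        _ = -a₁ * phi p (S (α * (t - E2))) := by rw [hαα]
      rw [hval] at hd
      exact hd
    · exact ⟨le_refl _, by linarith only [hT1pos]⟩
    · rw [hvE2]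
      norm_num [hS0]
    · rw [hv'E2]
      rw [show α * (E2 - E2) = 0 by ring, hS'0]
      ring
  -- assemble the three conclusions
  refine ⟨?_, ?_, ?_⟩
  · intro t ht0 ht1
    exact (hpiece1 t ⟨by linarith, ht1⟩).1
  · intro t ht0 ht1
    exact (hpiece2 t ⟨ht0.le, by linarith [hπE2]⟩).1
  · rintro t ⟨htl, htr⟩
    have hT1pi : T1 ≤ pip p := by
      have h1 : α * T1 ≤ α * pip p := by
        rw [hαT1]
        have h5 := mul_le_mul_of_nonneg_right hαhalf.le hpip.le
        linarith only [h5]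
      exact le_of_mul_le_mul_left h1 hα0
    rcases le_total t E2 with hcase | hcase
    · -- t ∈ [pip p, E2]
      have hvt : v t = -γ * S (β * (t - T1)) := (hpiece2 t ⟨by linarith, hcase⟩).1
      have hs : 2 * pip p - t ∈ Set.Icc T1 E2 := by
        constructor
        · linarith [h2pE2]
        · linarith [hπE2]
      have hvs : v (2 * pip p - t) = -γ * S (β * (2 * pip p - t - T1)) := (hpiece2 _ hs).1
      rw [hvt, hvs]
      congr 1
      have hsum : β * (2 * pip p - t - T1) = pip p - β * (t - T1) := by
        have h1 : β * (2 * pip p - 2 * T1) = pip p := by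
          have h2 : 2 * pip p - 2 * T1 = pip p * (2 - α⁻¹) := by
            rw [hT1def]
            field_simp
          rw [h2, show pip p * (2 - α⁻¹) = pip p * β⁻¹ by rw [hβinv]]
          field_simp
        linarith only [h1]
      rw [hsum, hreflpi]
    · -- t ∈ [E2, 2 pip p]
      have hvt : v t = S (α * (t - E2)) := (hpiece3 t ⟨hcase, by linarith [h2pE2]⟩).1
      have hs : 2 * pip p - t ∈ Set.Icc (-T1) T1 := by
        constructor
        · linarith [h2pE2, hT1pos]
        · linarith [h2pE2]
      have hvs : v (2 * pip p - t) = S (α * (2 * pip p - t) + pip p / 2) := (hpiece1 _ hs).1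
      rw [hvt, hvs]
      have hsum : α * (2 * pip p - t) + pip p / 2 = pip p - α * (t - E2) := by
        have h1 : α * (2 * pip p - E2) = α * T1 := by rw [h2pE2]
        linear_combination h1 + hαT1
      rw [hsum, hreflpi]
end

section
/- Let I_p = ∫₀^{π_p/2} sin_p t dt. Then I_p = ((p−1)^{2/p}/p) · B(2/p, 1 − 1/p), where B(r,s) = ∫₀¹ t^{r−1}(1−t)^{s−1} dt is the Euler Beta function. -/
open MeasureTheory intervalIntegral Set Real Filter

noncomputable def gaux (p : ℝ) : ℝ → ℝ := fun s => (1 - s ^ p / (p - 1)) ^ (-(1 : ℝ) / p)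

lemma gaux_nonneg {p : ℝ} (hp : 2 ≤ p) (s : ℝ) : 0 ≤ gaux p s := by
  have hp0 : (0:ℝ) < p := by linarith
  set A := 1 - s ^ p / (p - 1) with hA
  rcases le_or_gt 0 A with h | h
  · exact Real.rpow_nonneg h _
  · rw [gaux, ← hA, Real.rpow_def_of_neg h]
    have hcos : 0 ≤ Real.cos (-(1:ℝ) / p * Real.pi) := by
      have h2 : -(1:ℝ) / p * Real.pi = -(Real.pi / p) := by ring
      rw [h2, Real.cos_neg]
      apply Real.cos_nonneg_of_mem_Icc
      constructor
      · have := Real.pi_pos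
        have : 0 ≤ Real.pi / p := by positivity
        linarith
      · rw [div_le_div_iff₀ hp0 (by norm_num : (0:ℝ) < 2)]
        nlinarith [Real.pi_pos]
    positivity

lemma gaux_measurable (p : ℝ) : Measurable (gaux p) := by
  unfold gaux; fun_prop

lemma base_pos {p x : ℝ} (hp : 2 ≤ p) (hx : 0 ≤ x) (hxc : x < (p - 1) ^ (1 / p)) :
    0 < 1 - x ^ p / (p - 1) := by
  have hp0 : (0:ℝ) < p := by linarith
  have hpm1 : (0:ℝ) < p - 1 := by linarith
  have hcp : ((p - 1) ^ (1 / p) : ℝ) ^ p = p - 1 := by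
    rw [← Real.rpow_mul hpm1.le, one_div, inv_mul_cancel₀ hp0.ne', Real.rpow_one]
  have h1 : x ^ p < p - 1 := by
    calc x ^ p < ((p - 1) ^ (1 / p)) ^ p := Real.rpow_lt_rpow hx hxc hp0
    _ = p - 1 := hcp
  have h2 : x ^ p / (p - 1) < 1 := (div_lt_one hpm1).mpr h1
  linarith

lemma gaux_pos {p x : ℝ} (hp : 2 ≤ p) (hx : 0 ≤ x) (hxc : x < (p - 1) ^ (1 / p)) :
    0 < gaux p x :=
  Real.rpow_pos_of_pos (base_pos hp hx hxc) _

lemma gaux_continuousAt {p x : ℝ} (hp : 2 ≤ p) (hx : 0 ≤ x) (hxc : x < (p - 1) ^ (1 / p)) :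
    ContinuousAt (gaux p) x := by
  have hp0 : (0:ℝ) < p := by linarith
  have hb : ContinuousAt (fun s : ℝ => 1 - s ^ p / (p - 1)) x := by
    have h1 : ContinuousAt (fun s : ℝ => s ^ p) x :=
      Real.continuousAt_rpow_const x p (Or.inr hp0.le)
    fun_prop
  exact hb.rpow_const (Or.inl (base_pos hp hx hxc).ne')

lemma theta_image {p : ℝ} (hp : 2 ≤ p) :
    (fun u : ℝ => ((p - 1) * u) ^ (1 / p)) '' Ioo 0 1 = Ioo 0 ((p - 1) ^ (1 / p)) := by
  have hp0 : (0:ℝ) < p := by linarith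
  have hpm1 : (0:ℝ) < p - 1 := by linarith
  ext x
  constructor
  · rintro ⟨u, hu, rfl⟩
    constructor
    · exact Real.rpow_pos_of_pos (by nlinarith [hu.1]) _
    · exact Real.rpow_lt_rpow (by nlinarith [hu.1]) (by nlinarith [hu.1, hu.2]) (by positivity)
  · rintro ⟨hx0, hxc⟩
    refine ⟨x ^ p / (p - 1), ⟨by positivity, ?_⟩, ?_⟩
    · have h1 : x ^ p < p - 1 := by
        have h2 := base_pos hp hx0.le hxc
        have h3 : x ^ p / (p - 1) < 1 := by linarith
        calc x ^ p = (x ^ p / (p - 1)) * (p - 1) := by field_simp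
        _ < 1 * (p - 1) := by apply mul_lt_mul_of_pos_right h3 hpm1
        _ = p - 1 := one_mul _
      exact (div_lt_one hpm1).mpr h1
    · show ((p - 1) * (x ^ p / (p - 1))) ^ (1 / p) = x
      rw [mul_div_cancel₀ _ hpm1.ne', ← Real.rpow_mul hx0.le, mul_one_div, div_self hp0.ne',
        Real.rpow_one]

lemma cov_general {p : ℝ} (hp : 2 ≤ p) (r : ℝ) :
    ∫ x in Ioo (0:ℝ) ((p - 1) ^ (1 / p)), x ^ r * gaux p x
      = ((p - 1) ^ ((r + 1) / p) / p) *
          ∫ u in Ioo (0:ℝ) 1, u ^ ((r + 1) / p - 1) * (1 - u) ^ (-(1 : ℝ) / p) := by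
  have hp0 : (0:ℝ) < p := by linarith
  have hpm1 : (0:ℝ) < p - 1 := by linarith
  have hderiv : ∀ u ∈ Ioo (0:ℝ) 1,
      HasDerivWithinAt (fun u : ℝ => ((p - 1) * u) ^ (1 / p))
        (1 / p * ((p - 1) * u) ^ (1 / p - 1) * (p - 1)) (Ioo 0 1) u := by
    intro u hu
    have hbu : (p - 1) * u ≠ 0 := (mul_pos hpm1 hu.1).ne'
    have h1 : HasDerivAt (fun y : ℝ => y ^ (1 / p))
        (1 / p * ((p - 1) * u) ^ (1 / p - 1)) ((p - 1) * u) :=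
      Real.hasDerivAt_rpow_const (Or.inl hbu)
    have h2 : HasDerivAt (fun v : ℝ => (p - 1) * v) (p - 1) u := by
      simpa using (hasDerivAt_id u).const_mul (p - 1)
    exact (h1.comp u h2).hasDerivWithinAt
  have hinj : InjOn (fun u : ℝ => ((p - 1) * u) ^ (1 / p)) (Ioo 0 1) := by
    intro u hu v hv h
    have hq : ∀ w : ℝ, 0 < w → (((p - 1) * w) ^ (1 / p)) ^ p = (p - 1) * w := by
      intro w hw
      rw [← Real.rpow_mul (by positivity : (0:ℝ) ≤ (p - 1) * w), one_div,
        inv_mul_cancel₀ hp0.ne', Real.rpow_one]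
    have h3 : (p - 1) * u = (p - 1) * v := by
      rw [← hq u hu.1, ← hq v hv.1]
      simp only at h
      rw [h]
    exact mul_left_cancel₀ hpm1.ne' h3
  rw [← theta_image hp, integral_image_eq_integral_abs_deriv_smul measurableSet_Ioo hderiv hinj,
    ← MeasureTheory.integral_const_mul]
  apply setIntegral_congr_fun measurableSet_Ioo
  intro u hu
  have hu0 : 0 < u := hu.1
  have hb : 0 < (p - 1) * u := mul_pos hpm1 hu0
  have hbp : (((p - 1) * u) ^ (1 / p)) ^ p = (p - 1) * u := by
    rw [← Real.rpow_mul hb.le, one_div, inv_mul_cancel₀ hp0.ne', Real.rpow_one]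
  have hg : gaux p (((p - 1) * u) ^ (1 / p)) = (1 - u) ^ (-(1 : ℝ) / p) := by
    simp only [gaux]
    rw [hbp]
    congr 2
    field_simp
  have hpow : ((((p - 1) * u) ^ (1 / p)) : ℝ) ^ r = ((p - 1) * u) ^ (r / p) := by
    rw [← Real.rpow_mul hb.le, one_div_mul_eq_div]
  have hdpos : 0 < 1 / p * ((p - 1) * u) ^ (1 / p - 1) * (p - 1) :=
    mul_pos (mul_pos (by positivity) (Real.rpow_pos_of_pos hb _)) hpm1
  have h1 : ((p - 1) * u) ^ (1 / p - 1) * ((p - 1) * u) ^ (r / p)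
      = (p - 1) ^ ((r + 1) / p - 1) * u ^ ((r + 1) / p - 1) := by
    rw [← Real.rpow_add hb, show 1 / p - 1 + r / p = (r + 1) / p - 1 by ring,
      Real.mul_rpow hpm1.le hu0.le]
  have hconst : (p - 1) * (p - 1) ^ ((r + 1) / p - 1) = (p - 1) ^ ((r + 1) / p) := by
    nth_rewrite 1 [← Real.rpow_one (p - 1)]
    rw [← Real.rpow_add hpm1]
    ring_nf
  have key : (1 / p * ((p - 1) * u) ^ (1 / p - 1) * (p - 1)) * ((p - 1) * u) ^ (r / p)
      = ((p - 1) ^ ((r + 1) / p) / p) * u ^ ((r + 1) / p - 1) := by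
    linear_combination ((p - 1) / p) * h1 + (u ^ ((r + 1) / p - 1) / p) * hconst
  show |1 / p * ((p - 1) * u) ^ (1 / p - 1) * (p - 1)| •
      ((((p - 1) * u) ^ (1 / p)) ^ r * gaux p (((p - 1) * u) ^ (1 / p)))
    = (p - 1) ^ ((r + 1) / p) / p * (u ^ ((r + 1) / p - 1) * (1 - u) ^ (-(1 : ℝ) / p))
  rw [smul_eq_mul, abs_of_pos hdpos, hg, hpow]
  linear_combination ((1 - u) ^ (-(1 : ℝ) / p)) * key

lemma beta_eval {a : ℝ} (ha : 0 < a) (ha1 : a < 1) :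
    ∫ x in (0:ℝ)..1, x ^ (a - 1) * (1 - x) ^ (-a) = Real.pi / Real.sin (Real.pi * a) := by
  have h1 : Complex.Gamma a * Complex.Gamma (1 - a)
      = Complex.Gamma ((a : ℂ) + (1 - a)) * Complex.betaIntegral a (1 - a) :=
    Complex.Gamma_mul_Gamma_eq_betaIntegral (by simpa using ha)
      (by simp [Complex.sub_re]; linarith)
  have h2 : Complex.Gamma a * Complex.Gamma (1 - a) = (Real.pi : ℂ) / Complex.sin (Real.pi * a) :=
    Complex.Gamma_mul_Gamma_one_sub a
  have h3 : Complex.betaIntegral a (1 - a) = (Real.pi : ℂ) / Complex.sin (Real.pi * a) := by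
    rw [h2] at h1
    simpa [Complex.Gamma_one] using h1.symm
  have h4 : Complex.betaIntegral a (1 - a)
      = ((∫ x in (0:ℝ)..1, x ^ (a - 1) * (1 - x) ^ (-a) : ℝ) : ℂ) := by
    rw [Complex.betaIntegral, ← intervalIntegral.integral_ofReal]
    apply intervalIntegral.integral_congr
    intro x hx
    rw [Set.uIcc_of_le (by norm_num : (0:ℝ) ≤ 1)] at hx
    push_cast
    rw [Complex.ofReal_cpow hx.1, Complex.ofReal_cpow (show (0:ℝ) ≤ 1 - x by linarith [hx.2])]
    push_cast
    ring_nf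
  have h6 := h4.symm.trans h3
  have h5 : ((Real.pi / Real.sin (Real.pi * a) : ℝ) : ℂ)
      = (Real.pi : ℂ) / Complex.sin (Real.pi * a) := by
    push_cast [Complex.ofReal_sin]
    norm_num
  rw [← h5] at h6
  exact_mod_cast h6

lemma Fc {p : ℝ} (hp : 2 ≤ p) :
    ∫ x in Ioo (0:ℝ) ((p - 1) ^ (1 / p)), gaux p x = pip p / 2 := by
  have hp0 : (0:ℝ) < p := by linarith
  have hsin : 0 < Real.sin (π / p) := Real.sin_pos_of_pos_of_lt_pi (by positivity)
    ((div_lt_iff₀ hp0).mpr (by nlinarith [Real.pi_pos]))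
  have h := cov_general hp 0
  simp only [Real.rpow_zero, one_mul, zero_add] at h
  have hbeta : ∫ u in Ioo (0:ℝ) 1, u ^ (1 / p - 1) * (1 - u) ^ (-(1:ℝ) / p)
      = π / Real.sin (π / p) := by
    rw [← MeasureTheory.integral_Ioc_eq_integral_Ioo,
      ← intervalIntegral.integral_of_le (by norm_num : (0:ℝ) ≤ 1)]
    have hb := beta_eval (show 0 < 1/p by positivity)
      (show 1/p < 1 by rw [div_lt_one hp0]; linarith)
    rw [mul_one_div] at hb
    rw [← hb]
    apply intervalIntegral.integral_congr
    intro x hx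
    rw [neg_div]
  rw [h, hbeta, pip]
  field_simp


/-- **Lemma 2.2' / Lemma on `I_p`.** Let `S = sin_p` be the solution of
`(φ_p(S'))' + φ_p(S) = 0`, `S(0) = 0`, `S'(0) = 1`, implicitly given on `[0, π_p/2]` by
`∫₀^{sin_p t} ds/(1 − s^p/(p−1))^{1/p} = t`.  Then
`I_p = ∫₀^{π_p/2} sin_p t dt = ((p−1)^{2/p}/p) · B(2/p, 1 − 1/p)` where `B` is the
Euler Beta function `B(r,s) = ∫₀¹ t^{r−1}(1−t)^{s−1} dt`. -/
theorem Ip_eq_beta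
    (p : ℝ) (S S' : ℝ → ℝ)
    (hp : 2 ≤ p)
    (hS : ∀ t, HasDerivAt S (S' t) t)
    (hSode : ∀ t, HasDerivAt (fun s => phi p (S' s)) (-phi p (S t)) t)
    (hS0 : S 0 = 0) (hS'0 : S' 0 = 1)
    (hSper : Function.Periodic S (2 * pip p)) (hSodd : ∀ t, S (-t) = -S t)
    (hSimp : ∀ t ∈ Set.Icc (0 : ℝ) (pip p / 2),
      ∫ s in (0 : ℝ)..(S t), (1 - s ^ p / (p - 1)) ^ (-(1 : ℝ) / p) = t) :
    ∫ t in (0 : ℝ)..(pip p / 2), S t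
      = ((p - 1) ^ (2 / p) / p) *
        ∫ t in (0 : ℝ)..1, t ^ (2 / p - 1) * (1 - t) ^ ((1 - 1 / p) - 1) := by
  have hp0 : (0:ℝ) < p := by linarith
  have hpm1 : (0:ℝ) < p - 1 := by linarith
  have hcpos : 0 < (p - 1) ^ (1 / p) := Real.rpow_pos_of_pos hpm1 _
  have hsin : 0 < Real.sin (π / p) := Real.sin_pos_of_pos_of_lt_pi (by positivity)
    ((div_lt_iff₀ hp0).mpr (by nlinarith [Real.pi_pos]))
  set T := pip p / 2 with hTdef
  have hTpos : 0 < T := by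
    rw [hTdef, pip]
    apply div_pos _ two_pos
    exact div_pos (by positivity) (mul_pos hp0 hsin)
  have hF : ∀ t ∈ Icc (0:ℝ) T, (∫ s in (0:ℝ)..(S t), gaux p s) = t := hSimp
  have hFc : (∫ s in (0:ℝ)..((p - 1) ^ (1 / p)), gaux p s) = T := by
    rw [intervalIntegral.integral_of_le hcpos.le, MeasureTheory.integral_Ioc_eq_integral_Ioo]
    exact Fc hp
  have gInt : IntervalIntegrable (gaux p) volume 0 ((p - 1) ^ (1 / p)) := by
    by_contra hcon
    rw [intervalIntegral.integral_undef hcon] at hFc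
    exact hTpos.ne hFc
  have hIntS : ∀ t : ℝ, 0 < t → t ≤ T → IntervalIntegrable (gaux p) volume 0 (S t) := by
    intro t ht htT
    by_contra hcon
    have h1 := hF t ⟨ht.le, htT⟩
    rw [intervalIntegral.integral_undef hcon] at h1
    exact ht.ne h1
  have hSpos : ∀ t : ℝ, 0 < t → t ≤ T → 0 < S t := by
    intro t ht htT
    by_contra hle
    push_neg at hle
    have h1 := hF t ⟨ht.le, htT⟩
    have h2 : 0 ≤ ∫ s in (S t)..(0:ℝ), gaux p s :=
      intervalIntegral.integral_nonneg hle (fun u _ => gaux_nonneg hp u)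
    have h3 : (∫ s in (0:ℝ)..(S t), gaux p s) = -∫ s in (S t)..(0:ℝ), gaux p s :=
      intervalIntegral.integral_symm _ _
    rw [h3] at h1
    linarith
  have isub : ∀ a b : ℝ, 0 ≤ a → a ≤ b → b ≤ (p - 1) ^ (1 / p) →
      IntervalIntegrable (gaux p) volume a b := by
    intro a b ha hab hbc
    apply gInt.mono_set
    rw [Set.uIcc_of_le hab, Set.uIcc_of_le hcpos.le]
    exact Icc_subset_Icc ha hbc
  have hSlt : ∀ t : ℝ, 0 ≤ t → t < T → S t < (p - 1) ^ (1 / p) := by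
    intro t ht htT
    rcases eq_or_lt_of_le ht with h0 | h0
    · rw [← h0, hS0]; exact hcpos
    · by_contra hge
      push_neg at hge
      have hint := hIntS t h0 htT.le
      have i2 : IntervalIntegrable (gaux p) volume ((p - 1) ^ (1 / p)) (S t) := by
        apply hint.mono_set
        rw [Set.uIcc_of_le hge, Set.uIcc_of_le (hSpos t h0 htT.le).le]
        exact Icc_subset_Icc hcpos.le le_rfl
      have hadd := intervalIntegral.integral_add_adjacent_intervals gInt i2
      have h2 : 0 ≤ ∫ s in ((p - 1) ^ (1 / p))..(S t), gaux p s :=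
        intervalIntegral.integral_nonneg hge (fun u _ => gaux_nonneg hp u)
      have h1 := hF t ⟨ht, htT.le⟩
      rw [hFc, h1] at hadd
      linarith
  have hmono : StrictMonoOn S (Icc 0 T) := by
    intro t1 h1 t2 h2 hlt
    rcases eq_or_lt_of_le h1.1 with h0 | h0
    · rw [← h0, hS0]
      exact hSpos t2 (h0 ▸ hlt) h2.2
    · by_contra hge
      push_neg at hge
      have ha := hF t1 ⟨h0.le, h1.2⟩
      have hb := hF t2 ⟨(lt_trans h0 hlt).le, h2.2⟩
      have hp2 : 0 < S t2 := hSpos t2 (lt_trans h0 hlt) h2.2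
      have i1 := hIntS t2 (lt_trans h0 hlt) h2.2
      have i2 : IntervalIntegrable (gaux p) volume (S t2) (S t1) := by
        apply (hIntS t1 h0 h1.2).mono_set
        rw [Set.uIcc_of_le hge, Set.uIcc_of_le (hSpos t1 h0 h1.2).le]
        exact Icc_subset_Icc hp2.le le_rfl
      have hadd := intervalIntegral.integral_add_adjacent_intervals i1 i2
      have hX : 0 ≤ ∫ s in (S t2)..(S t1), gaux p s :=
        intervalIntegral.integral_nonneg hge (fun u _ => gaux_nonneg hp u)
      rw [ha, hb] at hadd
      linarith
  have hST : S T = (p - 1) ^ (1 / p) := by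
    have hle : S T ≤ (p - 1) ^ (1 / p) := by
      have htend : Filter.Tendsto S (nhdsWithin T (Iio T)) (nhds (S T)) :=
        (hS T).continuousAt.continuousWithinAt.tendsto
      apply le_of_tendsto htend
      filter_upwards [Ioo_mem_nhdsLT_of_mem (show T ∈ Ioc 0 T from ⟨hTpos, le_rfl⟩)] with t ht
      exact (hSlt t ht.1.le ht.2).le
    rcases eq_or_lt_of_le hle with h | h
    · exact h
    · exfalso
      have hSTpos : 0 < S T := hSpos T hTpos le_rfl
      set m := (S T + (p - 1) ^ (1 / p)) / 2 with hm
      have hm1 : S T < m := by rw [hm]; linarith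
      have hm2 : m < (p - 1) ^ (1 / p) := by rw [hm]; linarith
      have i1 := hIntS T hTpos le_rfl
      have i2 := isub (S T) ((p - 1) ^ (1 / p)) hSTpos.le hle le_rfl
      have hadd := intervalIntegral.integral_add_adjacent_intervals i1 i2
      have hX0 : (∫ s in (S T)..((p - 1) ^ (1 / p)), gaux p s) = 0 := by
        have h7 := hF T ⟨hTpos.le, le_rfl⟩
        rw [h7, hFc] at hadd
        linarith
      have i3 := isub (S T) m hSTpos.le hm1.le hm2.le
      have i4 := isub m ((p - 1) ^ (1 / p)) (by linarith) hm2.le le_rfl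
      have hsplit := intervalIntegral.integral_add_adjacent_intervals i3 i4
      have hpos1 : 0 < ∫ s in (S T)..m, gaux p s := by
        apply intervalIntegral.intervalIntegral_pos_of_pos_on i3 _ hm1
        intro x hx
        exact gaux_pos hp (le_trans hSTpos.le hx.1.le) (lt_trans hx.2 hm2)
      have hpos2 : 0 ≤ ∫ s in m..((p - 1) ^ (1 / p)), gaux p s :=
        intervalIntegral.integral_nonneg hm2.le (fun u _ => gaux_nonneg hp u)
      rw [hX0] at hsplit
      linarith
  have hImage : S '' Ioo 0 T = Ioo 0 ((p - 1) ^ (1 / p)) := by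
    apply Subset.antisymm
    · rintro x ⟨t, ht, rfl⟩
      exact ⟨hSpos t ht.1 ht.2.le, hSlt t ht.1.le ht.2⟩
    · have h8 := intermediate_value_Ioo hTpos.le
        (fun t _ => (hS t).continuousAt.continuousWithinAt)
      rw [hS0, hST] at h8
      exact h8
  have hderivS : ∀ t ∈ Ioo (0:ℝ) T, 0 < gaux p (S t) ∧ S' t = (gaux p (S t))⁻¹ := by
    intro t ht
    have hy1 : 0 < S t := hSpos t ht.1 ht.2.le
    have hy2 : S t < (p - 1) ^ (1 / p) := hSlt t ht.1.le ht.2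
    have hgy : 0 < gaux p (S t) := gaux_pos hp hy1.le hy2
    refine ⟨hgy, ?_⟩
    have hint : IntervalIntegrable (gaux p) volume 0 (S t) := hIntS t ht.1 ht.2.le
    have hmeas : StronglyMeasurableAtFilter (gaux p) (nhds (S t)) :=
      ⟨Set.univ, Filter.univ_mem, (gaux_measurable p).aestronglyMeasurable⟩
    have hcg : ContinuousAt (gaux p) (S t) := gaux_continuousAt hp hy1.le hy2
    have hFd : HasDerivAt (fun u => ∫ s in (0:ℝ)..u, gaux p s) (gaux p (S t)) (S t) :=
      intervalIntegral.integral_hasDerivAt_right hint hmeas hcg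
    have hcomp : HasDerivAt (fun u => ∫ s in (0:ℝ)..(S u), gaux p s) (gaux p (S t) * S' t) t :=
      hFd.comp t (hS t)
    have heq : (fun u => ∫ s in (0:ℝ)..(S u), gaux p s) =ᶠ[nhds t] fun u => u := by
      filter_upwards [Ioo_mem_nhds ht.1 ht.2] with u hu
      exact hF u ⟨hu.1.le, hu.2.le⟩
    have hid : HasDerivAt (fun u => ∫ s in (0:ℝ)..(S u), gaux p s) 1 t :=
      (hasDerivAt_id t).congr_of_eventuallyEq heq
    have huniq : gaux p (S t) * S' t = 1 := hcomp.unique hid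
    rw [inv_eq_one_div, eq_div_iff hgy.ne']
    linear_combination huniq
  have hinjS : InjOn S (Ioo 0 T) := hmono.injOn.mono Ioo_subset_Icc_self
  have step2 : (∫ t in Ioo (0:ℝ) T, S t)
      = ∫ t in Ioo (0:ℝ) T, |S' t| • ((S t) ^ (1:ℝ) * gaux p (S t)) := by
    apply setIntegral_congr_fun measurableSet_Ioo
    intro t ht
    obtain ⟨hgy, hs'⟩ := hderivS t ht
    show S t = |S' t| • (S t ^ (1:ℝ) * gaux p (S t))
    rw [smul_eq_mul, hs', Real.rpow_one, abs_of_pos (inv_pos.mpr hgy)]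
    field_simp
  have step3 : (∫ x in Ioo (0:ℝ) ((p - 1) ^ (1 / p)), x ^ (1:ℝ) * gaux p x)
      = ∫ t in Ioo (0:ℝ) T, |S' t| • ((S t) ^ (1:ℝ) * gaux p (S t)) := by
    rw [← hImage]
    exact MeasureTheory.integral_image_eq_integral_abs_deriv_smul measurableSet_Ioo
      (fun t _ => (hS t).hasDerivWithinAt) hinjS _
  have step4 := cov_general hp 1
  have hfinal : (∫ t in (0:ℝ)..T, S t)
      = ((p - 1) ^ ((1 + 1) / p) / p) *
          ∫ u in Ioo (0:ℝ) 1, u ^ ((1 + 1) / p - 1) * (1 - u) ^ (-(1 : ℝ) / p) := by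
    rw [intervalIntegral.integral_of_le hTpos.le, MeasureTheory.integral_Ioc_eq_integral_Ioo,
      step2, ← step3, step4]
  rw [show ((1:ℝ) + 1) / p = 2 / p by norm_num] at hfinal
  rw [hfinal]
  congr 1
  rw [show ((1:ℝ) - 1 / p) - 1 = -(1:ℝ) / p by ring]
  rw [intervalIntegral.integral_of_le (by norm_num : (0:ℝ) ≤ 1),
    MeasureTheory.integral_Ioc_eq_integral_Ioo]
end

section
/- Consider h(r,θ,t) = ω^{-1} r − f₁(r,θ,t) − ω^{p-1} d^{1/p} r^{1/p} v(θ) f(t), where f₁(r,θ,t) = ω^{p-1}G(d^{1/p} r^{1/p} v(θ), t). Then h(r,θ,t)/r → ω^{-1} > 0 as r → +∞ uniformly in (θ,t), ∂h/∂r(r,θ,t) > 0 for all sufficiently large r, and there exist h₀ > 0 and a function R(h,t,θ), of class C^{19} in (h,t), such that for every h ≥ h₀ the number r = ωh − R(h,t,θ) is the unique solution of h(r,θ,t) = h, and |R(h,t,θ)| ≤ ωh/2. -/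
/-- Mixed partial derivative `D_x^i D_t^j F(x,t)` of a function of two real variables. -/
noncomputable def iterD (F : ℝ → ℝ → ℝ) (i j : ℕ) (x t : ℝ) : ℝ :=
  iteratedDeriv i (fun y => iteratedDeriv j (F y) t) x

open Real Filter Set

lemma phi_zero (p : ℝ) : phi p 0 = 0 := by simp [phi]

lemma rpow_sub_two_mul {y : ℝ} (hy : 0 < y) (P : ℝ) : y ^ (P-2) * y = y ^ (P-1) := by
  nth_rewrite 2 [← Real.rpow_one y]
  rw [← Real.rpow_add hy]
  congr 1; ring

-- master sublinear bound
lemma rpow_le_linear {p x δ : ℝ} (hp : 2 ≤ p) (hx : 0 ≤ x) (hδ : 0 < δ) :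
    x ^ (1/p : ℝ) ≤ 1 + δ * x + 1/(4*δ) := by
  have hp0 : 0 < p := by linarith
  have h2 : x ^ (1/p : ℝ) ≤ 1 + Real.sqrt x := by
    rcases le_total x 1 with h1 | h1
    · have := Real.rpow_le_one hx h1 (by positivity : (0:ℝ) ≤ 1/p)
      have := Real.sqrt_nonneg x
      linarith
    · have : x ^ (1/p : ℝ) ≤ x ^ (1/2 : ℝ) := by
        apply Real.rpow_le_rpow_of_exponent_le h1
        rw [div_le_div_iff₀ hp0 two_pos]; linarith
      rw [← Real.sqrt_eq_rpow] at this
      linarith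
  have h := Real.sq_sqrt hx
  have h4 : 4*δ*Real.sqrt x ≤ 4*δ^2*x + 1 := by
    nlinarith [sq_nonneg (2*δ*Real.sqrt x - 1)]
  have h5 : Real.sqrt x ≤ (4*δ^2*x+1)/(4*δ) := by
    rw [le_div_iff₀ (by positivity)]; nlinarith
  have h6 : (4*δ^2*x+1)/(4*δ) = δ*x + 1/(4*δ) := by field_simp
  linarith [h5, h6.le]

-- derivative of |s|^P
lemma myHasDerivAt_abs_rpow {P : ℝ} (hP : 1 < P) (y : ℝ) :
    HasDerivAt (fun s : ℝ => |s| ^ P) (P * phi P y) y := by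
  rcases lt_trichotomy y 0 with hy | hy | hy
  · have h1 : HasDerivAt (fun s : ℝ => (-s) ^ P) ((P * (-y) ^ (P - 1)) * (-1)) y := by
      have hbase : HasDerivAt (fun s : ℝ => -s) (-1 : ℝ) y := (hasDerivAt_id y).neg
      exact (Real.hasDerivAt_rpow_const (p := P) (Or.inl (by linarith))).comp y hbase
    have h2 : (fun s : ℝ => |s| ^ P) =ᶠ[nhds y] fun s => (-s) ^ P := by
      filter_upwards [Iio_mem_nhds hy] with s hs
      rw [abs_of_neg hs]
    have := h1.congr_of_eventuallyEq h2
    refine this.congr_deriv ?_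
    have hy' : (0:ℝ) < -y := by linarith
    rw [phi, abs_of_neg hy]
    have h3 := rpow_sub_two_mul hy' P
    nlinarith [h3]
  · subst hy
    rw [phi_zero, mul_zero]
    rw [hasDerivAt_iff_tendsto_slope]
    have hb : Tendsto (fun s : ℝ => |s| ^ (P - 1)) (nhdsWithin 0 {(0:ℝ)}ᶜ) (nhds 0) := by
      have hc : ContinuousAt (fun s : ℝ => |s| ^ (P - 1)) 0 :=
        continuous_abs.continuousAt.rpow_const (Or.inr (by linarith))
      have h7 : Tendsto (fun s : ℝ => |s| ^ (P - 1)) (nhdsWithin 0 {(0:ℝ)}ᶜ) (nhds (|(0:ℝ)| ^ (P-1))) :=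
        hc.tendsto.mono_left nhdsWithin_le_nhds
      simpa [Real.zero_rpow (by linarith : P - 1 ≠ 0)] using h7
    apply squeeze_zero_norm _ hb
    intro s
    rcases eq_or_ne s 0 with rfl | hs
    · simp [Real.zero_rpow (by linarith : P - 1 ≠ 0), slope_def_field,
        Real.zero_rpow (by linarith : P ≠ 0)]
    · have habs : (0:ℝ) < |s| := abs_pos.2 hs
      rw [slope_def_field]
      have e1 : (|s| ^ P - |(0:ℝ)| ^ P) / (s - 0) = |s| ^ P / s := by
        simp [Real.zero_rpow (by linarith : P ≠ 0)]
      rw [e1]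
      have e2 : ‖|s| ^ P / s‖ = |s| ^ P / |s| := by
        rw [norm_div]
        simp [abs_of_nonneg (Real.rpow_nonneg (abs_nonneg s) P)]
      rw [e2, Real.rpow_sub habs, Real.rpow_one]
  · have h1 : HasDerivAt (fun s : ℝ => s ^ P) (P * y ^ (P - 1)) y :=
      Real.hasDerivAt_rpow_const (p := P) (Or.inl (ne_of_gt hy))
    have h2 : (fun s : ℝ => |s| ^ P) =ᶠ[nhds y] fun s => s ^ P := by
      filter_upwards [Ioi_mem_nhds hy] with s hs
      rw [abs_of_pos hs]
    have := h1.congr_of_eventuallyEq h2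
    refine this.congr_deriv ?_
    rw [phi, abs_of_pos hy, rpow_sub_two_mul hy]

-- derivative of (max s 0)^P
lemma myHasDerivAt_posPart_rpow {P : ℝ} (hP : 2 ≤ P) (y : ℝ) :
    HasDerivAt (fun s : ℝ => (max s 0) ^ P) (P * phi P (max y 0)) y := by
  rcases lt_trichotomy y 0 with hy | hy | hy
  · have h1 : HasDerivAt (fun _ : ℝ => (0:ℝ) ^ P) 0 y := hasDerivAt_const y _
    have h2 : (fun s : ℝ => (max s 0) ^ P) =ᶠ[nhds y] fun _ => (0:ℝ) ^ P := by
      filter_upwards [Iio_mem_nhds hy] with s hs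
      rw [max_eq_right hs.le]
    have := h1.congr_of_eventuallyEq h2
    refine this.congr_deriv ?_
    rw [max_eq_right hy.le, phi_zero, mul_zero]
  · subst hy
    rw [max_self, phi_zero, mul_zero]
    rw [hasDerivAt_iff_tendsto_slope]
    have hb : Tendsto (fun s : ℝ => |s| ^ (P - 1)) (nhdsWithin 0 {(0:ℝ)}ᶜ) (nhds 0) := by
      have hc : ContinuousAt (fun s : ℝ => |s| ^ (P - 1)) 0 :=
        continuous_abs.continuousAt.rpow_const (Or.inr (by linarith))
      have h7 : Tendsto (fun s : ℝ => |s| ^ (P - 1)) (nhdsWithin 0 {(0:ℝ)}ᶜ) (nhds (|(0:ℝ)| ^ (P-1))) :=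
        hc.tendsto.mono_left nhdsWithin_le_nhds
      simpa [Real.zero_rpow (by linarith : P - 1 ≠ 0)] using h7
    apply squeeze_zero_norm _ hb
    intro s
    rw [slope_def_field]
    have e0 : max (0:ℝ) 0 = 0 := max_self 0
    rw [e0, Real.zero_rpow (by linarith : P ≠ 0)]
    rcases le_or_gt s 0 with hs | hs
    · rw [max_eq_right hs, Real.zero_rpow (by linarith : P ≠ 0)]
      simp [Real.rpow_nonneg (abs_nonneg s)]
    · have habs : (0:ℝ) < |s| := abs_pos.2 (ne_of_gt hs)
      rw [max_eq_left hs.le, sub_zero, sub_zero]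
      have e2 : ‖s ^ P / s‖ = s ^ P / s := by
        rw [norm_of_nonneg]
        positivity
      rw [e2, abs_of_pos hs, Real.rpow_sub hs, Real.rpow_one]
  · have h1 : HasDerivAt (fun s : ℝ => s ^ P) (P * y ^ (P - 1)) y :=
      Real.hasDerivAt_rpow_const (p := P) (Or.inl (ne_of_gt hy))
    have h2 : (fun s : ℝ => (max s 0) ^ P) =ᶠ[nhds y] fun s => s ^ P := by
      filter_upwards [Ioi_mem_nhds hy] with s hs
      rw [max_eq_left hs.le]
    have := h1.congr_of_eventuallyEq h2
    refine this.congr_deriv ?_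
    rw [max_eq_left hy.le, phi, abs_of_pos hy, rpow_sub_two_mul hy]

-- phi q (phi p s) = s
lemma phi_phi {p q : ℝ} (hp : 2 ≤ p) (hq : q = p / (p - 1)) (s : ℝ) :
    phi q (phi p s) = s := by
  rcases eq_or_ne s 0 with rfl | hs
  · rw [phi_zero, phi_zero]
  · have habs : (0:ℝ) < |s| := abs_pos.2 hs
    have hp1 : p - 1 ≠ 0 := by linarith
    have e1 : |phi p s| = |s| ^ (p - 1) := by
      rw [phi, abs_mul, abs_of_nonneg (Real.rpow_nonneg (abs_nonneg s) _),
        rpow_sub_two_mul habs]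
    rw [phi, e1, phi]
    rw [← Real.rpow_mul (abs_nonneg s), mul_comm ((|s| ^ ((p-1)*(q-2)))) _]
    rw [mul_assoc, mul_comm s ((|s| ^ ((p-1)*(q-2)))), ← mul_assoc, ← Real.rpow_add habs]
    have he : p - 2 + (p - 1) * (q - 2) = 0 := by
      subst hq; field_simp; ring
    rw [he, Real.rpow_zero, one_mul]

lemma bounded_of_periodic (f : ℝ → ℝ) {c : ℝ} (hc : 0 < c) (hf : Continuous f)
    (hper : Function.Periodic f c) : ∃ M, 0 ≤ M ∧ ∀ t, |f t| ≤ M := by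
  obtain ⟨M, hM⟩ := (isCompact_Icc : IsCompact (Icc (0:ℝ) c)).exists_bound_of_continuousOn
    hf.continuousOn
  refine ⟨max M 0, le_max_right _ _, fun t => ?_⟩
  obtain ⟨y, hy, hfy⟩ := hper.exists_mem_Ico₀ hc t
  rw [hfy]
  exact le_trans (by simpa using hM y ⟨hy.1, hy.2.le⟩) (le_max_left _ _)

lemma le_of_rpow_le {x K p : ℝ} (hx : 0 ≤ x) (hp0 : 0 < p) (h : x ^ p ≤ K) :
    x ≤ K ^ (1/p : ℝ) := by
  have := Real.rpow_le_rpow (Real.rpow_nonneg hx p) h (by positivity : (0:ℝ) ≤ 1/p)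
  rwa [← Real.rpow_mul hx, mul_one_div, div_self hp0.ne', Real.rpow_one] at this

lemma v_bound {p q a₁ b₁ : ℝ} (v v' : ℝ → ℝ) (hp : 2 ≤ p) (hq : q = p/(p-1))
    (ha₁ : 0 < a₁) (hb₁ : 0 < b₁)
    (hv : ∀ t, HasDerivAt v (v' t) t)
    (hode : ∀ t, HasDerivAt (fun s => phi p (v' s))
      (-a₁ * phi p (max (v t) 0) + b₁ * phi p (max (-v t) 0)) t)
    (hv0 : v 0 = (p - 1) ^ ((1:ℝ) / p)) (hv'0 : v' 0 = 0) :
    ∃ M, 0 ≤ M ∧ ∀ t, |v t| ≤ M := by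
  have hp0 : 0 < p := by linarith
  have hp1 : (0:ℝ) < p - 1 := by linarith
  have hq1 : 1 < q := by
    rw [hq, lt_div_iff₀ hp1]; linarith
  have hq0 : 0 < q := by linarith
  set w := fun s => phi p (v' s) with hw
  set H := fun t => (1/q) * |w t| ^ q + (a₁/p) * (max (v t) 0) ^ p
    + (b₁/p) * (max (-v t) 0) ^ p with hH
  have hHd : ∀ t, HasDerivAt H 0 t := by
    intro t
    have h1 : HasDerivAt (fun s => |w s| ^ q)
        ((q * phi q (w t)) * (-a₁ * phi p (max (v t) 0) + b₁ * phi p (max (-v t) 0))) t := by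
      have := (myHasDerivAt_abs_rpow hq1 (w t)).comp t (hode t)
      exact this
    have h2 : HasDerivAt (fun s => (max (v s) 0) ^ p) ((p * phi p (max (v t) 0)) * v' t) t := by
      have := (myHasDerivAt_posPart_rpow hp (v t)).comp t (hv t)
      exact this
    have h3 : HasDerivAt (fun s => (max (-v s) 0) ^ p)
        ((p * phi p (max (-v t) 0)) * (-v' t)) t := by
      have := (myHasDerivAt_posPart_rpow hp (-v t)).comp t ((hv t).neg)
      exact this
    have hsum := ((h1.const_mul (1/q)).add (h2.const_mul (a₁/p))).add (h3.const_mul (b₁/p))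
    have hphi : phi q (w t) = v' t := phi_phi hp hq (v' t)
    rw [hphi] at hsum
    refine hsum.congr_deriv ?_
    field_simp
    ring
  have hconst : ∀ t, H t = H 0 :=
    fun t => is_const_of_deriv_eq_zero (fun s => (hHd s).differentiableAt)
      (fun s => (hHd s).deriv) t 0
  have hv0pos : 0 < v 0 := by rw [hv0]; positivity
  have hH0 : H 0 = (a₁/p) * (p - 1) := by
    have hw0 : w 0 = 0 := by rw [hw]; simp [hv'0, phi_zero]
    have e1 : max (v 0) 0 = v 0 := max_eq_left hv0pos.le
    have e2 : max (-v 0) 0 = 0 := max_eq_right (by linarith)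
    have e3 : (v 0) ^ (p : ℝ) = p - 1 := by
      rw [hv0, ← Real.rpow_mul hp1.le, one_div_mul_cancel hp0.ne', Real.rpow_one]
    rw [hH]
    simp only [hw0, e1, e2, e3]
    rw [abs_zero, Real.zero_rpow hq0.ne', Real.zero_rpow hp0.ne']
    ring
  refine ⟨((p-1) + a₁*(p-1)/b₁) ^ (1/p : ℝ), Real.rpow_nonneg (by positivity) _, fun t => ?_⟩
  have hHt := (hconst t).trans hH0
  have T1 : 0 ≤ (1/q) * |w t| ^ q := by positivity
  have T2 : 0 ≤ (a₁/p) * (max (v t) 0) ^ p := by positivity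
  have T3 : 0 ≤ (b₁/p) * (max (-v t) 0) ^ p := by positivity
  have hT2 : (a₁/p) * (max (v t) 0) ^ p ≤ (a₁/p) * (p - 1) := by
    rw [hH] at hHt; linarith
  have hT3 : (b₁/p) * (max (-v t) 0) ^ p ≤ (a₁/p) * (p - 1) := by
    rw [hH] at hHt; linarith
  have hb2 : (max (v t) 0) ^ (p:ℝ) ≤ p - 1 :=
    le_of_mul_le_mul_left hT2 (by positivity)
  have hb3 : (max (-v t) 0) ^ (p:ℝ) ≤ a₁*(p-1)/b₁ := by
    have h' : (b₁/p) * (max (-v t) 0) ^ (p:ℝ) ≤ (b₁/p) * (a₁*(p-1)/b₁) := by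
      have e : (b₁/p) * (a₁*(p-1)/b₁) = (a₁/p)*(p-1) := by field_simp
      rw [e]; exact hT3
    exact le_of_mul_le_mul_left h' (by positivity)
  rcases le_total 0 (v t) with hvt | hvt
  · rw [abs_of_nonneg hvt]
    have : v t = max (v t) 0 := (max_eq_left hvt).symm
    rw [this]
    apply le_of_rpow_le (le_max_right _ _) hp0
    have : (0:ℝ) ≤ a₁*(p-1)/b₁ := by positivity
    linarith
  · rw [abs_of_nonpos hvt]
    have : -v t = max (-v t) 0 := (max_eq_left (by linarith)).symm
    rw [this]
    apply le_of_rpow_le (le_max_right _ _) hp0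
    linarith



set_option maxHeartbeats 2000000

/-- For the Hamiltonian
`h(r,θ,t) = ω⁻¹ r − f₁(r,θ,t) − ω^{p-1} d^{1/p} r^{1/p} v(θ) f(t)`, where
`f₁(r,θ,t) = ω^{p-1} G(d^{1/p} r^{1/p} v(θ), t)`, one has `h/r → ω⁻¹ > 0` as
`r → +∞` uniformly in `(θ,t)`, `∂h/∂r > 0` for all large `r`, and there are
`h₀ > 0` and a function `R(h,t,θ)`, `C^{19}` in `(h,t)`, such that for `h ≥ h₀`
the number `r = ωh − R(h,t,θ)` is the unique solution of `h(r,θ,t) = h`, with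
`|R(h,t,θ)| ≤ ωh/2`. -/
theorem time_energy_exchange
    (p q a₁ b₁ d ω C : ℝ) (v v' f : ℝ → ℝ) (G : ℝ → ℝ → ℝ) (ham : ℝ → ℝ → ℝ → ℝ)
    (hp : 2 ≤ p) (hq : q = p / (p - 1))
    (ha₁ : 0 < a₁) (hb₁ : 0 < b₁)
    (hab : a₁ ^ (-(1 : ℝ) / p) + b₁ ^ (-(1 : ℝ) / p) = 2)
    (hd : d = p / a₁) (hω : 0 < ω)
    -- `v`
    (hv : ∀ t, HasDerivAt v (v' t) t)
    (hode : ∀ t, HasDerivAt (fun s => phi p (v' s))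
      (-a₁ * phi p (max (v t) 0) + b₁ * phi p (max (-v t) 0)) t)
    (hv0 : v 0 = (p - 1) ^ (1 / p)) (hv'0 : v' 0 = 0)
    -- `f`, `G`
    (hf : ContDiff ℝ 23 f) (hfper : Function.Periodic f (2 * pip p))
    (hG : ContDiff ℝ 21 (fun z : ℝ × ℝ => G z.1 z.2))
    (hGper : ∀ x t, G x (t + 2 * pip p) = G x t)
    (hC : 0 < C)
    (hGbd : ∀ i j : ℕ, i + j ≤ 21 → ∀ x t : ℝ, |iterD G i j x t| ≤ C)
    -- the Hamiltonian
    (hham : ∀ r θ t : ℝ, ham r θ t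
      = ω⁻¹ * r - ω ^ (p - 1) * G (d ^ (1 / p) * r ^ (1 / p) * v θ) t
        - ω ^ (p - 1) * d ^ (1 / p) * r ^ (1 / p) * v θ * f t) :
    (0 < ω⁻¹) ∧
    (∀ ε : ℝ, 0 < ε → ∃ r₀ : ℝ, ∀ r : ℝ, r₀ ≤ r → ∀ θ t : ℝ,
      |ham r θ t / r - ω⁻¹| < ε) ∧
    (∃ r₀ : ℝ, ∀ r : ℝ, r₀ ≤ r → ∀ θ t : ℝ,
      0 < deriv (fun r' => ham r' θ t) r) ∧
    (∃ h₀ : ℝ, 0 < h₀ ∧ ∃ R : ℝ → ℝ → ℝ → ℝ,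
      (∀ θ : ℝ, ContDiffOn ℝ 19 (fun z : ℝ × ℝ => R z.1 z.2 θ)
        (Set.Ici h₀ ×ˢ (Set.univ : Set ℝ))) ∧
      ∀ hh : ℝ, h₀ ≤ hh → ∀ t θ : ℝ,
        |R hh t θ| ≤ ω * hh / 2 ∧
        ham (ω * hh - R hh t θ) θ t = hh ∧
        (∀ r : ℝ, ham r θ t = hh → r = ω * hh - R hh t θ)) := by
  have hp0 : 0 < p := by linarith
  have hp1 : (0:ℝ) < p - 1 := by linarith
  have hωi : 0 < ω⁻¹ := inv_pos.2 hω
  have hωω : ω⁻¹ * ω = 1 := inv_mul_cancel₀ hω.ne'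
  have hd0 : 0 < d := by rw [hd]; positivity
  have hΩ : 0 < ω ^ (p-1 : ℝ) := Real.rpow_pos_of_pos hω _
  have hdp : 0 < d ^ ((1:ℝ)/p) := Real.rpow_pos_of_pos hd0 _
  -- boundedness of f
  have hpip : 0 < 2 * pip p := by
    have hsin : 0 < Real.sin (Real.pi / p) := by
      apply Real.sin_pos_of_pos_of_lt_pi (by positivity)
      rw [div_lt_iff₀ hp0]
      nlinarith [Real.pi_pos]
    have : 0 < pip p := by
      rw [pip]
      exact div_pos (by positivity) (mul_pos hp0 hsin)
    linarith
  obtain ⟨Mf, hMf0, hMf⟩ := bounded_of_periodic f hpip hf.continuous hfper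
  obtain ⟨Mv, hMv0, hMv⟩ := v_bound v v' hp hq ha₁ hb₁ hv hode hv0 hv'0
  -- bounds on G and its x-derivative
  have hGb : ∀ x t, |G x t| ≤ C := by
    intro x t
    simpa [iterD] using hGbd 0 0 (by norm_num) x t
  have hGxb : ∀ x t, |deriv (fun y => G y t) x| ≤ C := by
    intro x t
    have h := hGbd 1 0 (by norm_num) x t
    simpa [iterD, iteratedDeriv_one, iteratedDeriv_zero] using h
  have hGd : ∀ (t x : ℝ), HasDerivAt (fun y => G y t) (deriv (fun y => G y t) x) x := by
    intro t x
    have h1 : Differentiable ℝ (fun z : ℝ×ℝ => G z.1 z.2) := hG.differentiable (by norm_num)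
    have h2 : DifferentiableAt ℝ (fun y => G y t) x :=
      (h1.comp (differentiable_id.prodMk (differentiable_const t))).differentiableAt
    exact h2.hasDerivAt
  set A : ℝ := ω ^ (p-1:ℝ) * C with hA
  set B : ℝ := ω ^ (p-1:ℝ) * d ^ ((1:ℝ)/p) * Mv * Mf with hB
  have hA0 : 0 ≤ A := by positivity
  have hB0 : 0 ≤ B := by positivity
  -- fundamental bound on the perturbation
  have hg : ∀ r θ t, |ham r θ t - ω⁻¹ * r| ≤ A + B * |r| ^ ((1:ℝ)/p) := by
    intro r θ t
    rw [hham]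
    have e : ω⁻¹ * r - ω ^ (p-1:ℝ) * G (d ^ ((1:ℝ)/p) * r ^ ((1:ℝ)/p) * v θ) t
        - ω ^ (p-1:ℝ) * d ^ ((1:ℝ)/p) * r ^ ((1:ℝ)/p) * v θ * f t - ω⁻¹ * r
        = -(ω ^ (p-1:ℝ) * G (d ^ ((1:ℝ)/p) * r ^ ((1:ℝ)/p) * v θ) t
          + ω ^ (p-1:ℝ) * d ^ ((1:ℝ)/p) * r ^ ((1:ℝ)/p) * v θ * f t) := by ring
    rw [e, abs_neg]
    have h1 : |ω ^ (p-1:ℝ) * G (d ^ ((1:ℝ)/p) * r ^ ((1:ℝ)/p) * v θ) t| ≤ A := by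
      rw [abs_mul, abs_of_pos hΩ]
      exact mul_le_mul_of_nonneg_left (hGb _ _) hΩ.le
    have h2 : |ω ^ (p-1:ℝ) * d ^ ((1:ℝ)/p) * r ^ ((1:ℝ)/p) * v θ * f t|
        ≤ B * |r| ^ ((1:ℝ)/p) := by
      have e2 : |ω ^ (p-1:ℝ) * d ^ ((1:ℝ)/p) * r ^ ((1:ℝ)/p) * v θ * f t|
          = ω ^ (p-1:ℝ) * d ^ ((1:ℝ)/p) * |r ^ ((1:ℝ)/p)| * |v θ| * |f t| := by
        rw [abs_mul, abs_mul, abs_mul, abs_mul, abs_of_pos hΩ, abs_of_pos hdp]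
      rw [e2]
      have hr : |r ^ ((1:ℝ)/p)| ≤ |r| ^ ((1:ℝ)/p) := Real.abs_rpow_le_abs_rpow r _
      have c1 : ω ^ (p-1:ℝ) * d ^ ((1:ℝ)/p) * |r ^ ((1:ℝ)/p)| * |v θ| * |f t|
          ≤ ω ^ (p-1:ℝ) * d ^ ((1:ℝ)/p) * |r| ^ ((1:ℝ)/p) * Mv * Mf := by
        apply mul_le_mul _ (hMf t) (abs_nonneg _) (by positivity)
        apply mul_le_mul _ (hMv θ) (abs_nonneg _) (by positivity)
        exact mul_le_mul_of_nonneg_left hr (by positivity)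
      have c2 : ω ^ (p-1:ℝ) * d ^ ((1:ℝ)/p) * |r| ^ ((1:ℝ)/p) * Mv * Mf
          = B * |r| ^ ((1:ℝ)/p) := by rw [hB]; ring
      linarith
    calc |_ + _| ≤ _ + _ := abs_add_le _ _
      _ ≤ A + B * |r| ^ ((1:ℝ)/p) := add_le_add h1 h2
  set A₃ : ℝ := A + B + B*(B+1)*ω with hA₃
  have hA₃0 : 0 ≤ A₃ := by positivity
  have hsub : ∀ r : ℝ, B * |r| ^ ((1:ℝ)/p) ≤ A₃ - A + (ω⁻¹/4)*|r| := by
    intro r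
    have hδ : (0:ℝ) < ω⁻¹/(4*(B+1)) := by positivity
    have h := rpow_le_linear hp (abs_nonneg r) hδ
    have hBδ : B * (ω⁻¹/(4*(B+1))) ≤ ω⁻¹/4 := by
      rw [mul_div_assoc']
      rw [div_le_div_iff₀ (by positivity) (by norm_num)]
      nlinarith
    have e : 1/(4*(ω⁻¹/(4*(B+1)))) = (B+1)*ω := by
      rw [inv_eq_one_div]
      field_simp
    have h2 : B * |r| ^ ((1:ℝ)/p) ≤ B * (1 + (ω⁻¹/(4*(B+1))) * |r| + 1/(4*(ω⁻¹/(4*(B+1))))) :=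
      mul_le_mul_of_nonneg_left h hB0
    rw [e] at h2
    have h3 : B * ((ω⁻¹/(4*(B+1))) * |r|) ≤ (ω⁻¹/4) * |r| := by
      rw [← mul_assoc]
      exact mul_le_mul_of_nonneg_right hBδ (abs_nonneg r)
    have h4 : B * (1 + (ω⁻¹/(4*(B+1))) * |r| + (B+1)*ω)
        = B + B*((ω⁻¹/(4*(B+1)))*|r|) + B*((B+1)*ω) := by ring
    rw [h4] at h2
    rw [hA₃]
    linarith
  have hlow : ∀ r θ t, 0 ≤ r → (3/4)*ω⁻¹*r - A₃ ≤ ham r θ t := by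
    intro r θ t hr
    have h1 := abs_le.1 (hg r θ t)
    have h2 := hsub r
    simp only [abs_of_nonneg hr] at h1 h2
    linarith [h1.1]
  have hupp : ∀ r θ t, ham r θ t ≤ ω⁻¹*r + (ω⁻¹/4)*|r| + A₃ := by
    intro r θ t
    have h1 := hg r θ t
    have h2 := hsub r
    have := abs_le.1 h1
    linarith [this.2]
  -- derivative in r
  set Dv : ℝ → ℝ → ℝ → ℝ := fun θ t r => ω⁻¹
    - (ω ^ (p-1:ℝ) * deriv (fun y => G y t) (d ^ ((1:ℝ)/p) * r ^ ((1:ℝ)/p) * v θ)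
        * (d ^ ((1:ℝ)/p) * v θ)
      + ω ^ (p-1:ℝ) * d ^ ((1:ℝ)/p) * v θ * f t) * ((1/p) * r ^ ((1:ℝ)/p - 1)) with hDv
  have hDer : ∀ θ t r, 0 < r → HasDerivAt (fun r' => ham r' θ t) (Dv θ t r) r := by
    intro θ t r hr
    have hfun : (fun r' => ham r' θ t)
        = fun r' => ω⁻¹ * r' - ω ^ (p-1:ℝ) * G (d ^ ((1:ℝ)/p) * r' ^ ((1:ℝ)/p) * v θ) t
          - ω ^ (p-1:ℝ) * d ^ ((1:ℝ)/p) * r' ^ ((1:ℝ)/p) * v θ * f t :=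
      funext fun r' => hham r' θ t
    rw [hfun]
    have h0 : HasDerivAt (fun r' : ℝ => r' ^ ((1:ℝ)/p)) ((1/p) * r ^ ((1:ℝ)/p - 1)) r :=
      Real.hasDerivAt_rpow_const (Or.inl hr.ne')
    have harg : HasDerivAt (fun r' : ℝ => d ^ ((1:ℝ)/p) * r' ^ ((1:ℝ)/p) * v θ)
        (d ^ ((1:ℝ)/p) * ((1/p) * r ^ ((1:ℝ)/p - 1)) * v θ) r :=
      (h0.const_mul (d ^ ((1:ℝ)/p))).mul_const (v θ)
    have hGcomp : HasDerivAt (fun r' : ℝ => G (d ^ ((1:ℝ)/p) * r' ^ ((1:ℝ)/p) * v θ) t)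
        (deriv (fun y => G y t) (d ^ ((1:ℝ)/p) * r ^ ((1:ℝ)/p) * v θ)
          * (d ^ ((1:ℝ)/p) * ((1/p) * r ^ ((1:ℝ)/p - 1)) * v θ)) r := by
      have := (hGd t (d ^ ((1:ℝ)/p) * r ^ ((1:ℝ)/p) * v θ)).comp r harg
      exact this
    have h1 : HasDerivAt (fun r' : ℝ => ω⁻¹ * r') (ω⁻¹ * 1) r :=
      (hasDerivAt_id r).const_mul ω⁻¹
    have h3 : HasDerivAt (fun r' : ℝ => ω ^ (p-1:ℝ) * d ^ ((1:ℝ)/p) * r' ^ ((1:ℝ)/p) * v θ * f t)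
        (ω ^ (p-1:ℝ) * d ^ ((1:ℝ)/p) * ((1/p) * r ^ ((1:ℝ)/p - 1)) * v θ * f t) r :=
      (((h0.const_mul (ω ^ (p-1:ℝ) * d ^ ((1:ℝ)/p))).mul_const (v θ)).mul_const (f t))
    have htot := (h1.sub (hGcomp.const_mul (ω ^ (p-1:ℝ)))).sub h3
    refine htot.congr_deriv ?_
    rw [hDv]
    ring
  set D₁ : ℝ := ω ^ (p-1:ℝ) * C * (d ^ ((1:ℝ)/p) * Mv) + B with hD₁
  have hD₁0 : 0 ≤ D₁ := by positivity
  have hDbound : ∀ θ t r, 0 < r → |Dv θ t r - ω⁻¹| ≤ D₁ * ((1/p) * r ^ ((1:ℝ)/p - 1)) := by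
    intro θ t r hr
    have hz : (0:ℝ) ≤ (1/p) * r ^ ((1:ℝ)/p - 1) := by positivity
    rw [hDv]
    have e : ω⁻¹ - (ω ^ (p-1:ℝ) * deriv (fun y => G y t) (d ^ ((1:ℝ)/p) * r ^ ((1:ℝ)/p) * v θ)
        * (d ^ ((1:ℝ)/p) * v θ) + ω ^ (p-1:ℝ) * d ^ ((1:ℝ)/p) * v θ * f t)
        * ((1/p) * r ^ ((1:ℝ)/p - 1)) - ω⁻¹
        = -((ω ^ (p-1:ℝ) * deriv (fun y => G y t) (d ^ ((1:ℝ)/p) * r ^ ((1:ℝ)/p) * v θ)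
        * (d ^ ((1:ℝ)/p) * v θ) + ω ^ (p-1:ℝ) * d ^ ((1:ℝ)/p) * v θ * f t)
        * ((1/p) * r ^ ((1:ℝ)/p - 1))) := by ring
    rw [e, abs_neg, abs_mul, abs_of_nonneg hz]
    apply mul_le_mul_of_nonneg_right _ hz
    have hx : |ω ^ (p-1:ℝ) * deriv (fun y => G y t) (d ^ ((1:ℝ)/p) * r ^ ((1:ℝ)/p) * v θ)
        * (d ^ ((1:ℝ)/p) * v θ)| ≤ ω ^ (p-1:ℝ) * C * (d ^ ((1:ℝ)/p) * Mv) := by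
      rw [abs_mul, abs_mul, abs_of_pos hΩ, abs_mul, abs_of_pos hdp]
      apply mul_le_mul _ (mul_le_mul_of_nonneg_left (hMv θ) hdp.le) (by positivity) (by positivity)
      exact mul_le_mul_of_nonneg_left (hGxb _ _) hΩ.le
    have hy : |ω ^ (p-1:ℝ) * d ^ ((1:ℝ)/p) * v θ * f t| ≤ B := by
      rw [abs_mul, abs_mul, abs_mul, abs_of_pos hΩ, abs_of_pos hdp, hB]
      apply mul_le_mul _ (hMf t) (abs_nonneg _) (by positivity)
      exact mul_le_mul_of_nonneg_left (hMv θ) (by positivity)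
    calc |_ + _| ≤ _ + _ := abs_add_le _ _
      _ ≤ D₁ := by rw [hD₁]; exact add_le_add hx hy
  -- choice of r₀
  have hexp : (0:ℝ) < 1 - 1/p := by
    have : 1/p < 1 := by rw [div_lt_one hp0]; linarith
    linarith
  have htendD : Tendsto (fun r : ℝ => D₁ * ((1/p) * r ^ ((1:ℝ)/p - 1))) atTop (nhds 0) := by
    have h1 : Tendsto (fun r : ℝ => r ^ ((1:ℝ)/p - 1)) atTop (nhds 0) := by
      have h2 := tendsto_rpow_neg_atTop hexp
      have e : ∀ r : ℝ, r ^ (-(1 - (1:ℝ)/p)) = r ^ ((1:ℝ)/p - 1) := by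
        intro r; congr 1; ring
      simpa [e] using h2
    have := h1.const_mul (D₁ * (1/p))
    simp only [mul_zero] at this
    convert this using 2
    ring
  obtain ⟨N, hN⟩ := eventually_atTop.1
    ((htendD.eventually (eventually_lt_nhds (by positivity : (0:ℝ) < ω⁻¹/2))))
  set r₀ : ℝ := max N 1 with hr₀def
  have hr₀1 : (1:ℝ) ≤ r₀ := le_max_right _ _
  have hr₀0 : (0:ℝ) < r₀ := by linarith
  have hDpos : ∀ θ t r, r₀ ≤ r → ω⁻¹/2 ≤ Dv θ t r ∧ 0 < r := by
    intro θ t r hr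
    have hrr : 0 < r := by linarith
    have hb := hDbound θ t r hrr
    have hlt := hN r (le_trans (le_max_left _ _) hr)
    have := abs_le.1 hb
    constructor
    · linarith [this.1]
    · exact hrr
  -- continuity in r
  have hcont : ∀ θ t, Continuous (fun r => ham r θ t) := by
    intro θ t
    have hfun : (fun r => ham r θ t)
        = fun r => ω⁻¹ * r - ω ^ (p-1:ℝ) * G (d ^ ((1:ℝ)/p) * r ^ ((1:ℝ)/p) * v θ) t
          - ω ^ (p-1:ℝ) * d ^ ((1:ℝ)/p) * r ^ ((1:ℝ)/p) * v θ * f t :=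
      funext fun r => hham r θ t
    rw [hfun]
    have c1 : Continuous (fun r : ℝ => r ^ ((1:ℝ)/p)) := by
      rw [continuous_iff_continuousAt]
      intro x
      exact Real.continuousAt_rpow_const x _ (Or.inr (by positivity))
    have cG : Continuous (fun r : ℝ => G (d ^ ((1:ℝ)/p) * r ^ ((1:ℝ)/p) * v θ) t) := by
      have harg : Continuous (fun r : ℝ => ((d ^ ((1:ℝ)/p) * r ^ ((1:ℝ)/p) * v θ, t) : ℝ×ℝ)) :=
        ((continuous_const.mul c1).mul continuous_const).prodMk continuous_const
      exact hG.continuous.comp harg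
    exact ((continuous_const.mul continuous_id).sub (continuous_const.mul cG)).sub
      (((continuous_const.mul c1).mul continuous_const).mul continuous_const)
  -- strict monotonicity on [r₀, ∞)
  have hmono : ∀ θ t, StrictMonoOn (fun r => ham r θ t) (Ici r₀) := by
    intro θ t
    apply strictMonoOn_of_deriv_pos (convex_Ici r₀) (hcont θ t).continuousOn
    intro x hx
    rw [interior_Ici] at hx
    have hx' : r₀ ≤ x := le_of_lt hx
    obtain ⟨hD, hxpos⟩ := hDpos θ t x hx'
    rw [(hDer θ t x hxpos).deriv]
    exact lt_of_lt_of_le (by positivity) hD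
  -- upper bound on ham on (-∞, r₀]
  set S : ℝ := (5/4)*ω⁻¹*r₀ + A₃ with hS
  have hSnn : 0 ≤ S := by positivity
  have hSb : ∀ θ t r, r ≤ r₀ → ham r θ t ≤ S := by
    intro θ t r hr
    have h := hupp r θ t
    rcases le_total r 0 with h0 | h0
    · rw [abs_of_nonpos h0] at h
      rw [hS]
      nlinarith
    · rw [abs_of_nonneg h0] at h
      rw [hS]
      nlinarith
  -- the threshold h₁
  set h₁ : ℝ := S + r₀ + r₀/(2*ω) + 8*A₃ + 1 with hh₁def
  have hh₁S : S < h₁ := by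
    have : 0 < r₀/(2*ω) := by positivity
    rw [hh₁def]; linarith
  have hh₁pos : 0 < h₁ := by
    have : 0 < r₀/(2*ω) := by positivity
    rw [hh₁def]; linarith
  have hh₁r₀ : r₀ ≤ 2*ω*h₁ := by
    have h1 : r₀/(2*ω) ≤ h₁ := by
      rw [hh₁def]; nlinarith
    calc r₀ = 2*ω*(r₀/(2*ω)) := by field_simp
      _ ≤ 2*ω*h₁ := by nlinarith
  have hh₁A : 8*A₃ ≤ h₁ := by
    rw [hh₁def]
    nlinarith [hr₀0, hSnn, div_nonneg hr₀0.le (by positivity : (0:ℝ) ≤ 2*ω)]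
  -- existence of solutions
  have hexist : ∀ θ t hh, h₁ ≤ hh → ∃ r, r₀ < r ∧ ham r θ t = hh := by
    intro θ t hh hhh
    set rb : ℝ := 2*ω*(hh + A₃) with hrb
    have hrb0 : r₀ ≤ rb := by
      have h1 : 2*ω*h₁ ≤ 2*ω*hh := by nlinarith
      have h2 : 2*ω*hh ≤ rb := by rw [hrb]; nlinarith
      linarith
    have hrbv : hh ≤ ham rb θ t := by
      have h := hlow rb θ t (by linarith : (0:ℝ) ≤ rb)
      have e : (3/4)*ω⁻¹*rb = (3/2)*(hh + A₃) := by
        rw [hrb]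
        calc (3/4)*ω⁻¹*(2*ω*(hh + A₃)) = (3/2)*(ω⁻¹*ω)*(hh + A₃) := by ring
          _ = (3/2)*(hh + A₃) := by rw [hωω]; ring
      rw [e] at h
      linarith
    have hIcc : hh ∈ Icc (ham r₀ θ t) (ham rb θ t) :=
      ⟨le_trans (le_trans (hSb θ t r₀ le_rfl) hh₁S.le) hhh, hrbv⟩
    obtain ⟨r, hrmem, hr⟩ := intermediate_value_Icc hrb0 ((hcont θ t).continuousOn) hIcc
    refine ⟨r, lt_of_le_of_ne hrmem.1 ?_, hr⟩
    intro hcontra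
    have : ham r θ t ≤ S := hSb θ t r (le_of_eq hcontra.symm)
    linarith
  -- uniqueness of solutions
  have hsolgt : ∀ θ t hh, h₁ ≤ hh → ∀ r, ham r θ t = hh → r₀ < r := by
    intro θ t hh hhh r hr
    by_contra hcon
    push_neg at hcon
    have := hSb θ t r hcon
    linarith
  have huniq : ∀ θ t hh, h₁ ≤ hh → ∀ r r', ham r θ t = hh → ham r' θ t = hh → r = r' := by
    intro θ t hh hhh r r' hr hr'
    have h1 := hsolgt θ t hh hhh r hr
    have h2 := hsolgt θ t hh hhh r' hr'
    exact (hmono θ t).injOn (le_of_lt h1) (le_of_lt h2) (hr.trans hr'.symm)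
  -- range of solutions
  have hrange : ∀ θ t hh, h₁ ≤ hh → ∀ r, ham r θ t = hh → ω*hh/2 ≤ r ∧ r ≤ 3*(ω*hh)/2 := by
    intro θ t hh hhh r hr
    have hgt := hsolgt θ t hh hhh r hr
    have hrpos : (0:ℝ) < r := by linarith
    have hA₃hh : 8*A₃ ≤ hh := le_trans hh₁A hhh
    have hhh0 : 0 < hh := lt_of_lt_of_le hh₁pos hhh
    have h1 := hlow r θ t hrpos.le
    have h2 := hupp r θ t
    rw [abs_of_nonneg hrpos.le] at h2
    rw [hr] at h1 h2
    constructor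
    · -- from h2 : hh ≤ (5/4) ω⁻¹ r + A₃
      nlinarith [mul_pos hω hhh0, mul_le_mul_of_nonneg_left h2 hω.le]
    · nlinarith [mul_pos hω hhh0, mul_le_mul_of_nonneg_left h1 hω.le]
  -- definition of R
  classical
  set R : ℝ → ℝ → ℝ → ℝ := fun hh t θ =>
    if H : ∃ r, r₀ < r ∧ ham r θ t = hh then ω*hh - H.choose else 0 with hRdef
  have hRspec : ∀ θ t hh, h₁ ≤ hh →
      r₀ < ω*hh - R hh t θ ∧ ham (ω*hh - R hh t θ) θ t = hh := by
    intro θ t hh hhh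
    have hex := hexist θ t hh hhh
    have e : R hh t θ = ω*hh - hex.choose := by
      rw [hRdef]
      simp only [dif_pos hex]
    rw [e]
    have e2 : ω*hh - (ω*hh - hex.choose) = hex.choose := by ring
    rw [e2]
    exact hex.choose_spec
  refine ⟨hωi, ?_, ?_, ?_⟩
  · -- uniform limit
    intro ε hε
    have htend2 : Tendsto (fun r : ℝ => A * r⁻¹ + B * r ^ ((1:ℝ)/p - 1)) atTop (nhds 0) := by
      have t1 : Tendsto (fun r : ℝ => A * r⁻¹) atTop (nhds 0) := by
        have := tendsto_inv_atTop_zero.const_mul A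
        simpa using this
      have t2 : Tendsto (fun r : ℝ => B * r ^ ((1:ℝ)/p - 1)) atTop (nhds 0) := by
        have h2 := tendsto_rpow_neg_atTop hexp
        have e : ∀ r : ℝ, r ^ (-(1 - (1:ℝ)/p)) = r ^ ((1:ℝ)/p - 1) := by
          intro r; congr 1; ring
        have h3 : Tendsto (fun r : ℝ => r ^ ((1:ℝ)/p - 1)) atTop (nhds 0) := by
          simpa [e] using h2
        have := h3.const_mul B
        simpa using this
      have := t1.add t2
      simpa using this
    obtain ⟨N', hN'⟩ := eventually_atTop.1 (htend2.eventually (eventually_lt_nhds hε))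
    refine ⟨max N' 1, fun r hr θ t => ?_⟩
    have hr1 : (1:ℝ) ≤ r := le_trans (le_max_right _ _) hr
    have hr0 : (0:ℝ) < r := by linarith
    have e1 : ham r θ t / r - ω⁻¹ = (ham r θ t - ω⁻¹ * r)/r := by
      rw [sub_div, mul_div_cancel_right₀ _ hr0.ne']
    rw [e1, abs_div, abs_of_pos hr0]
    have h1 : |ham r θ t - ω⁻¹ * r| / r ≤ (A + B * r ^ ((1:ℝ)/p))/r := by
      gcongr
      have h2 := hg r θ t
      rwa [abs_of_pos hr0] at h2
    have e2 : (A + B * r ^ ((1:ℝ)/p))/r = A * r⁻¹ + B * r ^ ((1:ℝ)/p - 1) := by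
      rw [Real.rpow_sub hr0, Real.rpow_one]
      ring
    have h3 := hN' r (le_trans (le_max_left _ _) hr)
    rw [e2] at h1
    exact lt_of_le_of_lt h1 h3
  · -- positive derivative
    refine ⟨r₀, fun r hr θ t => ?_⟩
    obtain ⟨hD, hrpos⟩ := hDpos θ t r hr
    rw [(hDer θ t r hrpos).deriv]
    exact lt_of_lt_of_le (by positivity) hD
  · -- the implicit function
    refine ⟨h₁ + 1, by linarith, R, ?_, ?_⟩
    · intro θ z hz
      have hz1 : h₁ + 1 ≤ z.1 := hz.1
      have hzgt : h₁ < z.1 := by linarith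
      obtain ⟨hgt, hsol⟩ := hRspec θ z.2 z.1 hzgt.le
      set rst : ℝ := ω*z.1 - R z.1 z.2 θ with hrst
      have hrpos : (0:ℝ) < rst := by linarith
      apply ContDiffAt.contDiffWithinAt
      set Φ : ℝ×ℝ → ℝ×ℝ := fun w => (ham w.1 θ w.2, w.2) with hΦdef
      have hΦeq : Φ = fun w : ℝ×ℝ =>
          ((ω⁻¹ * w.1 - ω ^ (p-1:ℝ) * G (d ^ ((1:ℝ)/p) * w.1 ^ ((1:ℝ)/p) * v θ) w.2
            - ω ^ (p-1:ℝ) * d ^ ((1:ℝ)/p) * w.1 ^ ((1:ℝ)/p) * v θ * f w.2, w.2) : ℝ×ℝ) := by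
        funext w
        rw [hΦdef]
        simp only
        rw [hham]
      have hG19 : ContDiff ℝ 19 (fun z : ℝ×ℝ => G z.1 z.2) := hG.of_le (by norm_num)
      have hf19 : ContDiff ℝ 19 f := hf.of_le (by norm_num)
      have hΦc : ContDiffAt ℝ 19 Φ (rst, z.2) := by
        rw [hΦeq]
        have crp : ContDiffAt ℝ 19 (fun w : ℝ×ℝ => w.1 ^ ((1:ℝ)/p)) (rst, z.2) :=
          ContDiffAt.comp ((rst, z.2) : ℝ×ℝ)
            (Real.contDiffAt_rpow_const_of_ne (x := rst) hrpos.ne')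
            contDiff_fst.contDiffAt
        have cinner : ContDiffAt ℝ 19
            (fun w : ℝ×ℝ => ((d ^ ((1:ℝ)/p) * w.1 ^ ((1:ℝ)/p) * v θ, w.2) : ℝ×ℝ)) (rst, z.2) :=
          ((contDiffAt_const.mul crp).mul contDiffAt_const).prodMk contDiff_snd.contDiffAt
        have cG : ContDiffAt ℝ 19
            (fun w : ℝ×ℝ => G (d ^ ((1:ℝ)/p) * w.1 ^ ((1:ℝ)/p) * v θ) w.2) (rst, z.2) :=
          hG19.contDiffAt.comp _ cinner
        have cf : ContDiffAt ℝ 19 (fun w : ℝ×ℝ => f w.2) (rst, z.2) :=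
          hf19.contDiffAt.comp _ contDiff_snd.contDiffAt
        exact (((contDiffAt_const.mul contDiff_fst.contDiffAt).sub (contDiffAt_const.mul cG)).sub
          ((((contDiffAt_const.mul crp)).mul contDiffAt_const).mul cf)).prodMk
          contDiff_snd.contDiffAt
      obtain ⟨hD2, -⟩ := hDpos θ z.2 rst hgt.le
      have hDvpos : 0 < Dv θ z.2 rst := lt_of_lt_of_le (by positivity) hD2
      have hΦL : HasFDerivAt Φ (fderiv ℝ Φ (rst, z.2)) (rst, z.2) :=
        (hΦc.differentiableAt (by norm_num)).hasFDerivAt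
      set L := fderiv ℝ Φ (rst, z.2) with hLdef
      have hL2 : ∀ u : ℝ×ℝ, (L u).2 = u.2 := by
        have h1 := ((ContinuousLinearMap.snd ℝ ℝ ℝ).hasFDerivAt
          (x := Φ ((rst, z.2) : ℝ×ℝ))).comp ((rst, z.2) : ℝ×ℝ) hΦL
        have h2 : HasFDerivAt ((ContinuousLinearMap.snd ℝ ℝ ℝ) ∘ Φ)
            (ContinuousLinearMap.snd ℝ ℝ ℝ) (rst, z.2) := by
          have hEq : ((ContinuousLinearMap.snd ℝ ℝ ℝ) : ℝ×ℝ →L[ℝ] ℝ) ∘ Φ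
              = fun w : ℝ×ℝ => w.2 := by
            funext w
            rw [hΦdef]
            rfl
          rw [hEq]
          exact (ContinuousLinearMap.snd ℝ ℝ ℝ).hasFDerivAt
        have h3 := h1.unique h2
        intro u
        have h4 := congrArg (fun (M : ℝ×ℝ →L[ℝ] ℝ) => M u) h3
        simpa using h4
      have hL1 : L ((1:ℝ), (0:ℝ)) = (Dv θ z.2 rst, 0) := by
        have hg0 : HasDerivAt (fun s : ℝ => ((s, z.2) : ℝ×ℝ)) (1, 0) rst :=
          (hasDerivAt_id rst).prodMk (hasDerivAt_const rst z.2)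
        have hcomp : HasDerivAt (fun s : ℝ => Φ (s, z.2)) (L (1, 0)) rst :=
          hΦL.comp_hasDerivAt rst hg0
        have hdirect : HasDerivAt (fun s : ℝ => Φ (s, z.2)) ((Dv θ z.2 rst, 0)) rst :=
          (hDer θ z.2 rst hrpos).prodMk (hasDerivAt_const rst z.2)
        exact hcomp.unique hdirect
      have hker : LinearMap.ker (L : (ℝ×ℝ) →ₗ[ℝ] (ℝ×ℝ)) = ⊥ := by
        rw [LinearMap.ker_eq_bot']
        intro u hu
        change L u = 0 at hu
        have h2 : u.2 = 0 := by rw [← hL2 u, hu]; rfl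
        have hu1 : u = u.1 • ((1:ℝ), (0:ℝ)) := by
          have e : u.1 • ((1:ℝ), (0:ℝ)) = ((u.1, (0:ℝ)) : ℝ×ℝ) := by
            simp [Prod.smul_mk]
          rw [e, ← h2]
        have h3 : L u = u.1 • L ((1:ℝ), (0:ℝ)) := by
          conv_lhs => rw [hu1]
          rw [map_smul]
        rw [hL1, hu, Prod.smul_mk, smul_eq_mul, smul_eq_mul] at h3
        have h5 : u.1 * Dv θ z.2 rst = 0 := by
          have := congrArg Prod.fst h3
          simpa using this.symm
        have h6 : u.1 = 0 := by
          rcases mul_eq_zero.1 h5 with h | h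
          · exact h
          · exact absurd h hDvpos.ne'
        rw [hu1, h6, zero_smul]
      have hsurj : LinearMap.range (L : (ℝ×ℝ) →ₗ[ℝ] (ℝ×ℝ)) = ⊤ := by
        rw [LinearMap.range_eq_top]
        intro w
        refine ⟨((w.1 - (L ((0:ℝ),(1:ℝ))).1 * w.2)/(Dv θ z.2 rst)) • ((1:ℝ),(0:ℝ))
          + w.2 • ((0:ℝ),(1:ℝ)), ?_⟩
        change L _ = w
        rw [map_add, map_smul, map_smul, hL1]
        have hb2 : (L ((0:ℝ),(1:ℝ))).2 = 1 := hL2 _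
        apply Prod.ext
        · simp only [Prod.fst_add, Prod.smul_mk, smul_eq_mul, Prod.mk.injEq,
            Prod.smul_fst, Prod.smul_snd]
          field_simp
          ring
        · simp [hb2]
      set e : (ℝ×ℝ) ≃L[ℝ] (ℝ×ℝ) := ContinuousLinearEquiv.ofBijective L hker hsurj with hedef
      have hecoe : (e : (ℝ×ℝ) →L[ℝ] (ℝ×ℝ)) = L := ContinuousLinearEquiv.coe_ofBijective _ _ _
      have hΦL' : HasFDerivAt Φ (e : (ℝ×ℝ) →L[ℝ] (ℝ×ℝ)) (rst, z.2) := by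
        rw [hecoe]; exact hΦL
      have hn19 : (19 : WithTop ℕ∞) ≠ 0 := by norm_num
      set ginv := hΦc.localInverse hΦL' hn19 with hginvdef
      have hΦz : Φ ((rst, z.2) : ℝ×ℝ) = z := by
        rw [hΦdef]
        simp only
        rw [hsol]
      have gcd : ContDiffAt ℝ 19 ginv z := by
        have h := hΦc.to_localInverse hΦL' hn19
        rwa [hΦz] at h
      have gright : ∀ᶠ y in nhds z, Φ (ginv y) = y := by
        have h := (hΦc.hasStrictFDerivAt' hΦL' hn19).eventually_right_inverse
        rwa [hΦz] at h
      have gval : ginv z = ((rst, z.2) : ℝ×ℝ) := by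
        have h := hΦc.localInverse_apply_image hΦL' hn19
        rwa [hΦz] at h
      have gev1 : ∀ᶠ y in nhds z, r₀ < (ginv y).1 := by
        have hopen : IsOpen {w : ℝ×ℝ | r₀ < w.1} := isOpen_lt continuous_const continuous_fst
        have hmem : {w : ℝ×ℝ | r₀ < w.1} ∈ nhds (ginv z) := hopen.mem_nhds (by rw [gval]; exact hgt)
        exact gcd.continuousAt.preimage_mem_nhds hmem
      have gev2 : ∀ᶠ y : ℝ×ℝ in nhds z, h₁ < y.1 := by
        have hopen : IsOpen {w : ℝ×ℝ | h₁ < w.1} := isOpen_lt continuous_const continuous_fst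
        exact hopen.mem_nhds hzgt
      have hev : (fun y : ℝ×ℝ => R y.1 y.2 θ) =ᶠ[nhds z] (fun y => ω*y.1 - (ginv y).1) := by
        filter_upwards [gright, gev1, gev2] with y hy1 hy2 hy3
        have c1 := congrArg Prod.fst hy1
        have c2 := congrArg Prod.snd hy1
        simp only [hΦdef] at c1 c2
        rw [c2] at c1
        obtain ⟨hgt', hsol'⟩ := hRspec θ y.2 y.1 hy3.le
        have h := huniq θ y.2 y.1 hy3.le _ _ c1 hsol'
        linarith
      have hfinal : ContDiffAt ℝ 19 (fun y : ℝ×ℝ => ω*y.1 - (ginv y).1) z :=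
        (contDiffAt_const.mul contDiff_fst.contDiffAt).sub
          (contDiff_fst.contDiffAt.comp z gcd)
      exact hfinal.congr_of_eventuallyEq hev


    · intro hh hh0 t θ
      have hhh : h₁ ≤ hh := by linarith
      obtain ⟨hgt, hsol⟩ := hRspec θ t hh hhh
      obtain ⟨hlo, hhi⟩ := hrange θ t hh hhh _ hsol
      refine ⟨abs_le.2 ⟨by linarith, by linarith⟩, hsol, fun r hr => ?_⟩
      exact huniq θ t hh hhh r _ hr hsol
end
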